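/- arXiv:2310.00580 — 6 statements merged into one kernel-verified Lean document; each statement's English description precedes it below -/
import Mathlib

section
/- Let G be a connected graph rooted at r, and let w be a valid weight function on G (i.e., w(r)=0, w(v)>0 for all v≠r, and every r-unsolvable pebble configuration p satisfies w(p) ≤ w(1_G), where 1_G assigns one pebble to each vertex). Let m = min over v ≠ r of w(v). Then the rooted pebbling number satisfies π(G,r) ≤ ⌊w(1_G)/m⌋ + 1. -/
open SimpleGraph Finset

def PebMove {V : Type*} [DecidableEq V] (G : SimpleGraph V) (p q : V → ℕ) : Prop :=
  ∃ u v, G.Adj u v ∧ 2 ≤ p u ∧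
    q = fun x => if x = u then p u - 2 else if x = v then p v + 1 else p x

def Solvable {V : Type*} [DecidableEq V] (G : SimpleGraph V) (r : V) (p : V → ℕ) : Prop :=
  ∃ q, Relation.ReflTransGen (PebMove G) p q ∧ 1 ≤ q r

noncomputable def confWeight {V : Type*} [Fintype V] (w : V → ℝ) (p : V → ℕ) : ℝ :=
  ∑ v, (p v : ℝ) * w v

def ValidWeight {V : Type*} [Fintype V] [DecidableEq V] (G : SimpleGraph V) (r : V)
    (w : V → ℝ) : Prop :=
  w r = 0 ∧ (∀ v, v ≠ r → 0 < w v) ∧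
    ∀ p : V → ℕ, ¬ Solvable G r p → confWeight w p ≤ confWeight w (fun _ => 1)

noncomputable def rootedPebblingNumber {V : Type*} [Fintype V] [DecidableEq V]
    (G : SimpleGraph V) (r : V) : ℕ :=
  sInf {N | ∀ p : V → ℕ, N ≤ ∑ v, p v → Solvable G r p}

noncomputable def pebblingNumber {V : Type*} [Fintype V] [DecidableEq V]
    (G : SimpleGraph V) : ℕ :=
  sInf {N | ∀ (r : V) (p : V → ℕ), N ≤ ∑ v, p v → Solvable G r p}

def cubeGraph (n : ℕ) : SimpleGraph (Fin n → Bool) :=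
  SimpleGraph.fromRel (fun x y => hammingDist x y = 1)

def addPendant {V : Type*} (G : SimpleGraph V) (a : V) : SimpleGraph (Option V) :=
  SimpleGraph.fromRel (fun x y =>
    match x, y with
    | some u, some v => G.Adj u v
    | none, some u => u = a
    | _, _ => False)

def lollipop (n m : ℕ) : SimpleGraph (Fin (n + 1) ⊕ Fin (m + 1)) :=
  SimpleGraph.fromRel (fun x y =>
    match x, y with
    | Sum.inl i, Sum.inl j => (i : ℕ) + 1 = (j : ℕ)
    | Sum.inl i, Sum.inr j => i = 0 ∧ j ≠ 0
    | Sum.inr i, Sum.inr j => i = 0 ∧ j ≠ 0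
    | _, _ => False)

theorem stmt0 {V : Type*} [Fintype V] [DecidableEq V] [Nontrivial V]
    (G : SimpleGraph V) (hG : G.Connected) (r : V) (w : V → ℝ)
    (hw : ValidWeight G r w) (m : ℝ)
    (hm : IsLeast {x : ℝ | ∃ v, v ≠ r ∧ w v = x} m) :
    rootedPebblingNumber G r ≤ ⌊confWeight w (fun _ => 1) / m⌋₊ + 1 := by
  obtain ⟨hwr, hwpos, hwle⟩ := hw
  obtain ⟨⟨v0, hv0, hv0w⟩, hmlb⟩ := hm
  have hmpos : 0 < m := hv0w ▸ hwpos v0 hv0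
  set W := confWeight w (fun _ => 1) with hW
  apply Nat.sInf_le
  intro p hp
  by_contra hns
  have hpr : p r = 0 := by
    by_contra h
    exact hns ⟨p, Relation.ReflTransGen.refl, Nat.one_le_iff_ne_zero.2 h⟩
  have hbound : m * (∑ v, (p v : ℝ)) ≤ confWeight w p := by
    rw [Finset.mul_sum]
    apply Finset.sum_le_sum
    intro v _
    by_cases hv : v = r
    · subst hv; simp [hpr]
    · rw [mul_comm]
      exact mul_le_mul_of_nonneg_left (hmlb ⟨v, hv, rfl⟩) (Nat.cast_nonneg _)
  have hWle : confWeight w p ≤ W := hwle p hns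
  have hNle : ((⌊W / m⌋₊ + 1 : ℕ) : ℝ) ≤ ∑ v, (p v : ℝ) := by
    exact_mod_cast hp
  have : ((⌊W / m⌋₊ + 1 : ℕ) : ℝ) ≤ W / m := by
    rw [le_div_iff₀ hmpos]
    calc ((⌊W / m⌋₊ + 1 : ℕ) : ℝ) * m = m * ((⌊W / m⌋₊ + 1 : ℕ) : ℝ) := mul_comm _ _
    _ ≤ m * ∑ v, (p v : ℝ) := by
        exact mul_le_mul_of_nonneg_left hNle hmpos.le
    _ ≤ confWeight w p := hbound
    _ ≤ W := hWle
  have h2 : ⌊W / m⌋₊ + 1 ≤ ⌊W / m⌋₊ := Nat.le_floor this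
  omega
end

section
/- (Conic Lemma) Let G be a graph rooted at r, and let G_1, …, G_m be connected subgraphs of G each containing r. Let w_1, …, w_m be valid weight functions on G_1, …, G_m respectively (extended by 0 to all of V(G)), and let a_1, …, a_m be non-negative reals. Define w = Σ_i a_i·w_i. If w(v) > 0 for every v ≠ r, then w is a valid weight function on G: every r-unsolvable configuration p on G satisfies w(p) ≤ w(1_G). -/
open SimpleGraph Finset

open scoped Classical in
noncomputable def extConf {V : Type*} (S : Set V) (p : {v // v ∈ S} → ℕ) : V → ℕ :=
  fun v => if h : v ∈ S then p ⟨v, h⟩ else 0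

lemma pebMove_dom {V : Type*} [DecidableEq V] {G : SimpleGraph V} {p p' q : V → ℕ}
    (h : PebMove G p p') (hd : ∀ v, p v ≤ q v) :
    ∃ q', PebMove G q q' ∧ ∀ v, p' v ≤ q' v := by
  obtain ⟨u, v, hadj, hu, rfl⟩ := h
  refine ⟨fun x => if x = u then q u - 2 else if x = v then q v + 1 else q x,
    ⟨u, v, hadj, le_trans hu (hd u), rfl⟩, fun x => ?_⟩
  simp only
  split_ifs with e1 e2
  · have := hd u; omega
  · have := hd v; omega
  · exact hd x

lemma rtg_dom {V : Type*} [DecidableEq V] {G : SimpleGraph V} {p p' : V → ℕ}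
    (h : Relation.ReflTransGen (PebMove G) p p') :
    ∀ q, (∀ v, p v ≤ q v) → ∃ q', Relation.ReflTransGen (PebMove G) q q' ∧ ∀ v, p' v ≤ q' v := by
  induction h using Relation.ReflTransGen.head_induction_on with
  | refl => exact fun q hq => ⟨q, Relation.ReflTransGen.refl, hq⟩
  | head hstep _ ih =>
    intro q hq
    obtain ⟨q1, hq1, hd1⟩ := pebMove_dom hstep hq
    obtain ⟨q', hq', hd'⟩ := ih q1 hd1
    exact ⟨q', Relation.ReflTransGen.head hq1 hq', hd'⟩

lemma solvable_mono {V : Type*} [DecidableEq V] {G : SimpleGraph V} {r : V} {p q : V → ℕ}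
    (hd : ∀ v, p v ≤ q v) (h : Solvable G r p) : Solvable G r q := by
  obtain ⟨p', hrtg, hr⟩ := h
  obtain ⟨q', hq', hd'⟩ := rtg_dom hrtg q hd
  exact ⟨q', hq', le_trans hr (hd' r)⟩

lemma pebMove_lift {V : Type*} [DecidableEq V] {G : SimpleGraph V} {H : G.Subgraph}
    {p q : H.verts → ℕ} (h : PebMove H.coe p q) :
    PebMove G (extConf H.verts p) (extConf H.verts q) := by
  obtain ⟨u, v, hadj, hu, rfl⟩ := h
  have hGadj : G.Adj u.1 v.1 := H.adj_sub hadj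
  refine ⟨u.1, v.1, hGadj, ?_, ?_⟩
  · simpa [extConf, u.2] using hu
  · funext x
    by_cases hx : x ∈ H.verts
    · simp only [extConf, dif_pos hx, dif_pos u.2, dif_pos v.2]
      by_cases h1 : x = u.1
      · simp [h1, Subtype.ext_iff]
      · by_cases h2 : x = v.1 <;>
          simp [h1, h2, Subtype.ext_iff]
    · have h1 : x ≠ u.1 := fun h => hx (h ▸ u.2)
      have h2 : x ≠ v.1 := fun h => hx (h ▸ v.2)
      simp [extConf, dif_neg hx, h1, h2]

lemma rtg_lift {V : Type*} [DecidableEq V] {G : SimpleGraph V} {H : G.Subgraph}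
    {p q : H.verts → ℕ} (h : Relation.ReflTransGen (PebMove H.coe) p q) :
    Relation.ReflTransGen (PebMove G) (extConf H.verts p) (extConf H.verts q) := by
  induction h with
  | refl => exact Relation.ReflTransGen.refl
  | tail _ hstep ih => exact ih.tail (pebMove_lift hstep)

lemma solvable_of_sub {V : Type*} [DecidableEq V] {G : SimpleGraph V} {H : G.Subgraph}
    {r : V} (hrv : r ∈ H.verts) {p : V → ℕ}
    (h : Solvable H.coe ⟨r, hrv⟩ (fun v => p v.1)) : Solvable G r p := by
  obtain ⟨q, hrtg, hq⟩ := h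
  have := rtg_lift (G := G) (H := H) hrtg
  refine solvable_mono (q := p) ?_ ⟨extConf H.verts q, this, ?_⟩
  · intro v
    unfold extConf
    split <;> simp
  · simpa [extConf, hrv] using hq

theorem stmt4 {V : Type*} [Fintype V] [DecidableEq V] (G : SimpleGraph V) (r : V)
    (m : ℕ) (H : Fin m → G.Subgraph)
    (hr : ∀ i, r ∈ (H i).verts) (hconn : ∀ i, (H i).Connected)
    (w : Fin m → V → ℝ)
    (hzero : ∀ i, ∀ v ∉ (H i).verts, w i v = 0)
    (hroot : ∀ i, w i r = 0)
    (hpos : ∀ i, ∀ v ∈ (H i).verts, v ≠ r → 0 < w i v)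
    (hvalid : ∀ i, ∀ p : V → ℕ, (∀ v ∉ (H i).verts, p v = 0) →
      ¬ Solvable ((H i).coe) ⟨r, hr i⟩ (fun v => p v.1) →
      confWeight (w i) p ≤ confWeight (w i) (fun _ => 1))
    (a : Fin m → ℝ) (ha : ∀ i, 0 ≤ a i)
    (W : V → ℝ) (hW : W = fun v => ∑ i, a i * w i v)
    (hWpos : ∀ v, v ≠ r → 0 < W v) :
    ∀ p : V → ℕ, ¬ Solvable G r p → confWeight W p ≤ confWeight W (fun _ => 1) := by
  classical
  intro p hp
  have key : ∀ q : V → ℕ, confWeight W q = ∑ i, a i * confWeight (w i) q := by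
    intro q
    simp only [confWeight, hW, Finset.mul_sum]
    rw [Finset.sum_comm]
    refine Finset.sum_congr rfl fun i _ => Finset.sum_congr rfl fun v _ => by ring
  rw [key, key]
  refine Finset.sum_le_sum fun i _ => mul_le_mul_of_nonneg_left ?_ (ha i)
  set pi : V → ℕ := fun v => if v ∈ (H i).verts then p v else 0 with hpi
  have hpeq : confWeight (w i) p = confWeight (w i) pi := by
    refine Finset.sum_congr rfl fun v _ => ?_
    by_cases hv : v ∈ (H i).verts
    · simp [pi, hv]
    · simp [pi, hv, hzero i v hv]
  rw [hpeq]
  refine hvalid i pi (fun v hv => by simp [pi, hv]) ?_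
  intro hs
  apply hp
  have : Solvable ((H i).coe) ⟨r, hr i⟩ (fun v => p v.1) := by
    have heq : (fun v : (H i).verts => pi v.1) = fun v : (H i).verts => p v.1 := by
      funext v; simp [pi, v.2]
    rwa [heq] at hs
  exact solvable_of_sub (hr i) this
end

section
/- For every positive integer k, the pebbling number of the odd cycle C_{2k+1} equals 2·⌊2^{k+1}/3⌋ + 1. -/
open SimpleGraph Finset

/-- pebbling fold: max pebbles deliverable to the head position -/
def foldPb : List ℕ → ℕ
  | [] => 0
  | a :: l => a + foldPb l / 2

/-- weighted sum with doubling weights from the far end -/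
def wtL : List ℕ → ℕ
  | [] => 0
  | a :: l => a * 2 ^ l.length + wtL l

lemma wtL_append (l₁ l₂ : List ℕ) : wtL (l₁ ++ l₂) = wtL l₁ * 2 ^ l₂.length + wtL l₂ := by
  induction l₁ with
  | nil => simp [wtL]
  | cons a l ih =>
    show wtL (a :: (l ++ l₂)) = _
    rw [show wtL (a :: (l ++ l₂)) = a * 2 ^ (l ++ l₂).length + wtL (l ++ l₂) from rfl, ih,
      List.length_append, show wtL (a :: l) = a * 2 ^ l.length + wtL l from rfl]
    ring

lemma wtL_reverse_cons (a : ℕ) (l : List ℕ) :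
    wtL (a :: l).reverse = a + 2 * wtL l.reverse := by
  rw [List.reverse_cons, wtL_append]
  simp [wtL]
  ring

lemma foldPb_wt (l : List ℕ) (a : ℕ) :
    2 * wtL (a :: l) + 2 ≤ 2 ^ (l.length + 1) * (foldPb (a :: l) + 1) := by
  induction l generalizing a with
  | nil => simp [wtL, foldPb]; omega
  | cons b l ih =>
    have hfold : foldPb (a :: b :: l) = a + foldPb (b :: l) / 2 := rfl
    have h1 : foldPb (b :: l) ≤ 2 * (foldPb (a :: b :: l) - a) + 1 := by omega
    have h2 : a ≤ foldPb (a :: b :: l) := by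
      rw [hfold]; omega
    have ihb := ih b
    have hw : wtL (a :: b :: l) = a * 2 ^ (l.length + 1) + wtL (b :: l) := rfl
    set m := l.length + 1
    set F := foldPb (a :: b :: l)
    calc 2 * wtL (a :: b :: l) + 2
        = 2 * a * 2 ^ m + (2 * wtL (b :: l) + 2) := by rw [hw]; ring
      _ ≤ 2 * a * 2 ^ m + 2 ^ m * (foldPb (b :: l) + 1) := by omega
      _ ≤ 2 * a * 2 ^ m + 2 ^ m * (2 * (F - a) + 2) := by
          have := Nat.mul_le_mul_left (2 ^ m) (show foldPb (b :: l) + 1 ≤ 2 * (F - a) + 2 by omega)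
          omega
      _ = 2 ^ m * (2 * a + 2 * (F - a) + 2) := by ring
      _ = 2 ^ m * (2 * F + 2) := by
          congr 1
          omega
      _ = 2 ^ (m + 1) * (F + 1) := by rw [pow_succ]; ring

lemma pairWt (l : List ℕ) : ∀ (A B c : ℕ),
    (∀ i < l.length, c ≤ 2 ^ (l.length - 1 - i) * A + 2 ^ i * B) →
    c * l.sum ≤ A * wtL l + B * wtL l.reverse := by
  induction l with
  | nil => simp
  | cons a l ih =>
    intro A B c h
    have h0 : c ≤ 2 ^ l.length * A + B := by
      have := h 0 (by simp)
      simpa using this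
    have hih : c * l.sum ≤ A * wtL l + (2 * B) * wtL l.reverse := by
      apply ih A (2 * B) c
      intro i hi
      have := h (i + 1) (by simp; omega)
      have he : l.length + 1 - 1 - (i + 1) = l.length - 1 - i := by omega
      calc c ≤ 2 ^ (l.length + 1 - 1 - (i + 1)) * A + 2 ^ (i + 1) * B := by
              simpa using this
        _ = 2 ^ (l.length - 1 - i) * A + 2 ^ i * (2 * B) := by rw [he, pow_succ]; ring
    have hw : wtL (a :: l) = a * 2 ^ l.length + wtL l := rfl
    rw [List.sum_cons, hw, wtL_reverse_cons]
    calc c * (a + l.sum) = c * a + c * l.sum := by ring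
      _ ≤ (2 ^ l.length * A + B) * a + (A * wtL l + (2 * B) * wtL l.reverse) := by
          have := Nat.mul_le_mul_right a h0
          omega
      _ = A * (a * 2 ^ l.length + wtL l) + B * (a + 2 * wtL l.reverse) := by ring

lemma foldPb_zeros (l : List ℕ) (h : l.sum = 0) : foldPb l = 0 := by
  induction l with
  | nil => rfl
  | cons a l ih =>
    simp only [List.sum_cons] at h
    have : a = 0 := by omega
    simp [foldPb, this, ih (by omega)]

lemma foldPb_zero_append (u l : List ℕ) (h : u.sum = 0) :
    foldPb (u ++ l) = foldPb l / 2 ^ u.length := by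
  induction u with
  | nil => simp
  | cons a u ih =>
    simp only [List.sum_cons] at h
    have ha : a = 0 := by omega
    have h2 : foldPb ((a :: u) ++ l) = foldPb (u ++ l) / 2 := by
      simp [foldPb, ha]
    rw [h2, ih (by omega), Nat.div_div_eq_div_mul, List.length_cons, pow_succ]

lemma three_not_dvd_pow2 (j : ℕ) : 2 ^ j % 3 ≠ 0 := by
  intro h
  have h3 : (3 : ℕ).Prime := by norm_num
  have : (3 : ℕ) ∣ 2 ^ j := Nat.dvd_of_mod_eq_zero h
  have := h3.dvd_of_dvd_pow this
  omega

set_option maxHeartbeats 1000000 in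
/-- The arithmetic core: a configuration on the cut-open cycle whose fold toward either
end is at most 1 has at most `2 * (2^(k+2)/3)` pebbles. -/
lemma coreLemma (k : ℕ) (u w : List ℕ) (α β : ℕ) (hu : u.length = k) (hw : w.length = k)
    (hA : foldPb (u ++ α :: β :: w) ≤ 1)
    (hB : foldPb (u ++ α :: β :: w).reverse ≤ 1) :
    (u ++ α :: β :: w).sum ≤ 2 * (2 ^ (k + 2) / 3) := by
  set z := u ++ α :: β :: w with hz
  have hlen : z.length = 2 * k + 2 := by simp [hz, hu, hw]; omega
  have hlenr : z.reverse.length = 2 * k + 2 := by simpa using hlen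
  -- S1, S2 bounds
  have hS : ∀ y : List ℕ, y.length = 2 * k + 2 → foldPb y ≤ 1 →
      2 * wtL y + 2 ≤ 2 ^ (2 * k + 3) := by
    intro y hy hf
    cases y with
    | nil => simp at hy
    | cons a l =>
      have h1 := foldPb_wt l a
      have hl : l.length + 1 = 2 * k + 2 := by simpa using hy
      rw [hl] at h1
      have h2 : 2 ^ (2 * k + 2) * (foldPb (a :: l) + 1) ≤ 2 ^ (2 * k + 2) * 2 :=
        Nat.mul_le_mul_left _ (by omega)
      have h3 : 2 ^ (2 * k + 3) = 2 ^ (2 * k + 2) * 2 := by rw [pow_succ]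
      omega
  have hS1 : 2 * wtL z + 2 ≤ 2 ^ (2 * k + 3) := hS z hlen hA
  have hS2 : 2 * wtL z.reverse + 2 ≤ 2 ^ (2 * k + 3) := hS z.reverse hlenr hB
  -- global weighted bound
  have hcoef : ∀ i < z.length, 3 * 2 ^ k ≤ 2 ^ (z.length - 1 - i) * 1 + 2 ^ i * 1 := by
    intro i hi
    rw [hlen] at hi ⊢
    simp only [mul_one]
    have h4 : (2:ℕ) ^ (k + 2) = 4 * 2 ^ k := by rw [pow_succ, pow_succ]; ring
    have he1 : (1:ℕ) ≤ 2 ^ i := Nat.one_le_two_pow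
    have he2 : (1:ℕ) ≤ 2 ^ (2 * k + 2 - 1 - i) := Nat.one_le_two_pow
    rcases le_or_gt (k + 2) (2 * k + 2 - 1 - i) with h | h
    · have h5 : 2 ^ (k + 2) ≤ 2 ^ (2 * k + 2 - 1 - i) := Nat.pow_le_pow_right (by norm_num) h
      omega
    · rcases le_or_gt (k + 2) i with h' | h'
      · have h5 : 2 ^ (k + 2) ≤ 2 ^ i := Nat.pow_le_pow_right (by norm_num) h'
        omega
      · have : i = k ∨ i = k + 1 := by omega
        rcases this with rfl | rfl
        · have he : 2 * i + 2 - 1 - i = i + 1 := by omega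
          rw [he, pow_succ]
          omega
        · have he : 2 * k + 2 - 1 - (k + 1) = k := by omega
          rw [he, pow_succ]
          omega
  have hmain : 3 * 2 ^ k * z.sum + 2 ≤ 2 ^ (2 * k + 3) := by
    have hp := pairWt z 1 1 (3 * 2 ^ k) hcoef
    simp only [one_mul] at hp
    omega
  set t := 2 ^ (k + 2) / 3 with ht
  have htmod : 3 * t + 2 ^ (k + 2) % 3 = 2 ^ (k + 2) := by rw [ht]; omega
  have htm := three_not_dvd_pow2 (k + 2)
  have htm2 : 2 ^ (k + 2) % 3 < 3 := Nat.mod_lt _ (by norm_num)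
  have hpk : (1:ℕ) ≤ 2 ^ k := Nat.one_le_two_pow
  have hE : 2 ^ (2 * k + 3) = 2 * (2 ^ k * 2 ^ (k + 2)) := by
    rw [show 2 * k + 3 = 1 + (k + (k + 2)) by omega, pow_add, pow_add]; ring
  have key : 3 * (2 ^ k * t) + 2 ^ k * (2 ^ (k + 2) % 3) = 2 ^ k * 2 ^ (k + 2) := by
    calc 3 * (2 ^ k * t) + 2 ^ k * (2 ^ (k + 2) % 3)
        = 2 ^ k * (3 * t + 2 ^ (k + 2) % 3) := by ring
      _ = 2 ^ k * 2 ^ (k + 2) := by rw [htmod]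
  have hCr : 2 ^ k * (2 ^ (k + 2) % 3) ≤ 2 ^ k * 2 := Nat.mul_le_mul_left _ (by omega)
  by_contra hcon
  push_neg at hcon
  have hN : 2 * t + 1 ≤ z.sum := hcon
  -- Step 1: z.sum = 2t+1
  have hNeq : z.sum = 2 * t + 1 := by
    by_contra hne
    have h2 : 2 * t + 2 ≤ z.sum := by omega
    have h6 : 3 * 2 ^ k * (2 * t + 2) + 2 ≤ 2 ^ (2 * k + 3) := by
      have := Nat.mul_le_mul_left (3 * 2 ^ k) h2
      omega
    rw [hE] at h6
    have h7 : 3 * 2 ^ k * (2 * t + 2) = 2 * (3 * (2 ^ k * t)) + 6 * 2 ^ k := by ring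
    linarith
  -- Step 2: 3t + 2 = 2^(k+2)
  have hmain1 : 3 * 2 ^ k * (2 * t + 1) + 2 ≤ 2 ^ (2 * k + 3) := by rw [← hNeq]; exact hmain
  have h3t : 3 * t + 2 = 2 ^ (k + 2) := by
    have hr12 : 2 ^ (k + 2) % 3 = 1 ∨ 2 ^ (k + 2) % 3 = 2 := by omega
    rcases hr12 with h | h
    · exfalso
      rw [h, mul_one] at key
      rw [hE] at hmain1
      have h7 : 3 * 2 ^ k * (2 * t + 1) = 2 * (3 * (2 ^ k * t)) + 3 * 2 ^ k := by ring
      linarith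
    · omega
  -- k ≥ 1
  have hk1 : 1 ≤ k := by
    rcases Nat.eq_zero_or_pos k with rfl | h
    · simp [ht] at h3t
    · exact h
  have hP2 : (2:ℕ) ^ k = 2 * 2 ^ (k - 1) := by
    rw [← pow_succ']; congr 1; omega
  have hP4 : (2:ℕ) ^ (k + 1) = 4 * 2 ^ (k - 1) := by
    rw [show k + 1 = (k - 1) + 2 by omega, pow_add]; ring
  have hP8 : (2:ℕ) ^ (k + 2) = 8 * 2 ^ (k - 1) := by
    rw [show k + 2 = (k - 1) + 3 by omega, pow_add]; ring
  -- Step 3: u.sum = 0 and w.sum = 0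
  have hsplitsum : z.sum = u.sum + (α + (β + w.sum)) := by simp [hz]
  have hWz : wtL z = wtL u * (8 * 2 ^ (k - 1)) +
      (α * (4 * 2 ^ (k - 1)) + (β * (2 * 2 ^ (k - 1)) + wtL w)) := by
    have hlen2 : (α :: β :: w).length = k + 2 := by simp [hw]
    have hstep : wtL (α :: β :: w) = α * 2 ^ (w.length + 1) + (β * 2 ^ w.length + wtL w) := rfl
    rw [hz, wtL_append, hlen2, hstep, hw, hP2, hP4, hP8]
  have hrevz : z.reverse = w.reverse ++ β :: α :: u.reverse := by simp [hz]
  have hWzr : wtL z.reverse = wtL w.reverse * (8 * 2 ^ (k - 1)) +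
      (β * (4 * 2 ^ (k - 1)) + (α * (2 * 2 ^ (k - 1)) + wtL u.reverse)) := by
    have hlen2 : (β :: α :: u.reverse).length = k + 2 := by simp [hu]
    have hstep : wtL (β :: α :: u.reverse) =
        β * 2 ^ (u.reverse.length + 1) + (α * 2 ^ u.reverse.length + wtL u.reverse) := rfl
    rw [hrevz, wtL_append, hlen2, hstep, List.length_reverse, hu, hP2, hP4, hP8]
  have huw : u.sum + w.sum = 0 := by
    by_contra hne
    have huw1 : 1 ≤ u.sum + w.sum := by omega
    have hu9 : 9 * 2 ^ (k - 1) * u.sum ≤ (8 * 2 ^ (k - 1)) * wtL u + 1 * wtL u.reverse := by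
      apply pairWt
      intro i hi
      rw [hu] at hi ⊢
      have he1 : (1:ℕ) ≤ 2 ^ i := Nat.one_le_two_pow
      rcases le_or_gt (k - 1 - i) 0 with h | h
      · have h0 : k - 1 - i = 0 := by omega
        have hi' : i = k - 1 := by omega
        rw [h0, hi', pow_zero]
        omega
      · have h16 : 2 ^ (k + 3) ≤ 2 ^ (k - 1 - i) * (8 * 2 ^ (k - 1)) := by
          rw [show (8:ℕ) * 2 ^ (k - 1) = 2 ^ ((k - 1) + 3) by rw [pow_add]; ring, ← pow_add]
          exact Nat.pow_le_pow_right (by norm_num) (by omega)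
        have hQ16 : (2:ℕ) ^ (k + 3) = 16 * 2 ^ (k - 1) := by
          rw [show k + 3 = (k - 1) + 4 by omega, pow_add]; ring
        omega
    have hw9 : 9 * 2 ^ (k - 1) * w.sum ≤ 1 * wtL w + (8 * 2 ^ (k - 1)) * wtL w.reverse := by
      apply pairWt
      intro i hi
      rw [hw] at hi ⊢
      have he1 : (1:ℕ) ≤ 2 ^ (k - 1 - i) := Nat.one_le_two_pow
      rcases Nat.eq_zero_or_pos i with rfl | h
      · simp only [pow_zero, Nat.sub_zero]
        omega
      · have h16 : 2 ^ (k + 3) ≤ 2 ^ i * (8 * 2 ^ (k - 1)) := by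
          rw [show (8:ℕ) * 2 ^ (k - 1) = 2 ^ ((k - 1) + 3) by rw [pow_add]; ring, ← pow_add]
          exact Nat.pow_le_pow_right (by norm_num) (by omega)
        have hQ16 : (2:ℕ) ^ (k + 3) = 16 * 2 ^ (k - 1) := by
          rw [show k + 3 = (k - 1) + 4 by omega, pow_add]; ring
        omega
    simp only [one_mul, mul_one] at hu9 hw9
    -- combine into sharpened bound
    have hs1m : 6 * 2 ^ (k - 1) * (2 * t + 1)
        = 6 * 2 ^ (k - 1) * (u.sum + (α + (β + w.sum))) := by
      rw [← hNeq, ← hsplitsum]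
    have hprod : 3 * 2 ^ (k - 1) * 1 ≤ 3 * 2 ^ (k - 1) * (u.sum + w.sum) :=
      Nat.mul_le_mul_left _ huw1
    have goal2 : 3 * 2 ^ k * (2 * t + 1) + 3 * 2 ^ (k - 1) ≤ wtL z + wtL z.reverse := by
      rw [hWz, hWzr, hP2]
      linarith [hu9, hw9, hprod, hs1m]
    have hfin : 3 * 2 ^ k * (2 * t + 1) + 3 * 2 ^ (k - 1) + 2 ≤ 2 ^ (2 * k + 3) := by
      omega
    rw [hE] at hfin
    have hexp : 3 * 2 ^ k * (2 * t + 1) = 6 * (2 ^ k * t) + 3 * 2 ^ k := by ring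
    linarith [key, hCr, hfin, hexp, hP2, Nat.one_le_two_pow (n := k - 1)]
  have husum : u.sum = 0 := by omega
  have hwsum : w.sum = 0 := by omega
  -- Step 4: exact folds on the concentrated configuration
  have hfoldz : foldPb z = (α + β / 2) / 2 ^ k := by
    rw [hz, foldPb_zero_append u _ husum, hu]
    have hstep : foldPb (α :: β :: w) = α + (β + foldPb w / 2) / 2 := rfl
    rw [hstep, foldPb_zeros w hwsum]
    norm_num
  have hfoldzr : foldPb z.reverse = (β + α / 2) / 2 ^ k := by
    rw [hrevz, foldPb_zero_append w.reverse _ (by rw [List.sum_reverse]; exact hwsum)]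
    have hstep : foldPb (β :: α :: u.reverse) = β + (α + foldPb u.reverse / 2) / 2 := rfl
    rw [hstep, foldPb_zeros u.reverse (by rw [List.sum_reverse]; exact husum),
      List.length_reverse, hw]
    norm_num
  rw [hfoldz] at hA
  rw [hfoldzr] at hB
  have hpkpos : 0 < 2 ^ k := by positivity
  have hAB : α + β / 2 < 2 * 2 ^ k := by
    have h5 : (α + β / 2) / 2 ^ k < 2 := by omega
    have := (Nat.div_lt_iff_lt_mul hpkpos).mp h5
    omega
  have hBB : β + α / 2 < 2 * 2 ^ k := by
    have h5 : (β + α / 2) / 2 ^ k < 2 := by omega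
    have := (Nat.div_lt_iff_lt_mul hpkpos).mp h5
    omega
  have hab : α + β = 2 * t + 1 := by
    rw [hsplitsum, husum, hwsum] at hNeq
    omega
  have h4 : (2:ℕ) ^ (k + 2) = 4 * 2 ^ k := by rw [pow_succ, pow_succ]; ring
  omega


lemma moveMany {V : Type*} [DecidableEq V] {G : SimpleGraph V} {b a : V} (hab : G.Adj b a) :
    ∀ (s : ℕ) (q : V → ℕ), 2 * s ≤ q b →
    Relation.ReflTransGen (PebMove G) q
      (fun x => if x = b then q b - 2 * s else if x = a then q a + s else q x) := by
  have hne : a ≠ b := hab.ne'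
  intro s
  induction s with
  | zero =>
    intro q _
    have : (fun x => if x = b then q b - 2 * 0 else if x = a then q a + 0 else q x) = q := by
      funext x
      split_ifs with h1 h2
      · subst h1; omega
      · subst h2; omega
      · rfl
    rw [this]
  | succ s ih =>
    intro q hq
    have hstep : PebMove G q
        (fun x => if x = b then q b - 2 else if x = a then q a + 1 else q x) :=
      ⟨b, a, hab, by omega, rfl⟩
    set q₁ := fun x => if x = b then q b - 2 else if x = a then q a + 1 else q x with hq₁
    have hq₁b : q₁ b = q b - 2 := by simp [hq₁]
    have hq₁a : q₁ a = q a + 1 := by simp [hq₁, hne]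
    have h2s : 2 * s ≤ q₁ b := by omega
    have htail := ih q₁ h2s
    have heq : (fun x => if x = b then q₁ b - 2 * s else if x = a then q₁ a + s else q₁ x)
        = (fun x => if x = b then q b - 2 * (s + 1) else if x = a then q a + (s + 1) else q x) := by
      funext x
      by_cases h1 : x = b
      · subst h1; simp [hq₁]; omega
      · by_cases h2 : x = a
        · subst h2; simp [hq₁, hne]; omega
        · simp [hq₁, h1, h2]
    rw [heq] at htail
    exact Relation.ReflTransGen.head hstep htail

lemma pathDeliver {V : Type*} [DecidableEq V] {G : SimpleGraph V} :
    ∀ (l : List V) (a : V) (p : V → ℕ), List.Chain G.Adj a l → (a :: l).Nodup →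
    ∃ q, Relation.ReflTransGen (PebMove G) p q ∧
      p a + foldPb (l.map p) / 2 ≤ q a ∧ ∀ x, x ∉ l → x ≠ a → q x = p x := by
  intro l
  induction l with
  | nil =>
    intro a p _ _
    exact ⟨p, Relation.ReflTransGen.refl, by simp [foldPb], fun x _ _ => rfl⟩
  | cons b l ih =>
    intro a p hchain hnd
    unfold List.Chain at hchain; rw [List.isChain_cons_cons] at hchain
    obtain ⟨hab, hbl⟩ := hchain
    have hnd' : (b :: l).Nodup := hnd.of_cons
    have hanotin : a ∉ b :: l := by
      have := hnd
      rw [List.nodup_cons] at this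
      exact this.1
    have hanb : a ≠ b := by simp at hanotin; tauto
    have hanotl : a ∉ l := by simp at hanotin; tauto
    obtain ⟨q₁, hq₁, hq₁b, hq₁out⟩ := ih b p hbl hnd'
    set F := foldPb ((b :: l).map p) with hF
    have hFval : F = p b + foldPb (l.map p) / 2 := rfl
    have hFq : F ≤ q₁ b := by omega
    have h2s : 2 * (F / 2) ≤ q₁ b := by omega
    have hmove := moveMany hab.symm (F / 2) q₁ h2s
    refine ⟨_, hq₁.trans hmove, ?_, ?_⟩
    · have h1 : q₁ a = p a := hq₁out a hanotl hanb
      simp only [Function.comp]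
      simp [hanb]
      omega
    · intro x hx hxa
      have hxb : x ≠ b := by simp at hx; tauto
      have hxl : x ∉ l := by simp at hx; tauto
      simp [hxb, hxa]
      exact hq₁out x hxl hxb

lemma solvable_of_fold {V : Type*} [DecidableEq V] {G : SimpleGraph V} (r : V) (l : List V)
    (p : V → ℕ) (hchain : List.Chain G.Adj r l) (hnd : (r :: l).Nodup)
    (h2 : 2 ≤ foldPb (l.map p)) : Solvable G r p := by
  obtain ⟨q, hq, hqr, -⟩ := pathDeliver l r p hchain hnd
  exact ⟨q, hq, by omega⟩

lemma solvable_transport {V : Type*} [DecidableEq V] {G : SimpleGraph V} (e : V ≃ V)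
    (he : ∀ a b, G.Adj a b → G.Adj (e a) (e b)) (r : V) (p : V → ℕ)
    (h : Solvable G r (p ∘ e)) : Solvable G (e r) p := by
  obtain ⟨q, hq, hq1⟩ := h
  refine ⟨q ∘ e.symm, ?_, by simpa using hq1⟩
  have hp : p = (p ∘ e) ∘ e.symm := by funext x; simp
  rw [hp]
  refine Relation.ReflTransGen.lift (fun f => f ∘ e.symm) ?_ _ _ hq
  rintro q1 q2 ⟨u, v, hadj, hu2, rfl⟩
  refine ⟨e u, e v, he u v hadj, by simpa using hu2, ?_⟩
  funext x
  have hne : u ≠ v := hadj.ne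
  by_cases h1 : x = e u
  · subst h1; simp [hne]
  · by_cases h2 : x = e v
    · subst h2; simp [hne.symm, h1]
    · have h1' : e.symm x ≠ u := fun hc => h1 (by rw [← hc, Equiv.apply_symm_apply])
      have h2' : e.symm x ≠ v := fun hc => h2 (by rw [← hc, Equiv.apply_symm_apply])
      simp [h1, h2, h1', h2']

/-! ### Cycle-specific setup -/

open Fin.NatCast Fin.CommRing

lemma cyc_adj_succ (kk : ℕ) (x : Fin (2*kk+3)) : (cycleGraph (2*kk+3)).Adj x (x+1) := by
  rw [cycleGraph_adj']
  right
  have h : x + 1 - x = 1 := by ring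
  rw [h]
  simp [Fin.val_one]

def vR (kk : ℕ) : List (Fin (2*kk+3)) :=
  (List.range (2*kk+2)).map (fun i => ((i+1 : ℕ) : Fin (2*kk+3)))

def vL (kk : ℕ) : List (Fin (2*kk+3)) :=
  (List.range (2*kk+2)).map (fun i => -((i+1 : ℕ) : Fin (2*kk+3)))

lemma cons0R (kk : ℕ) : (0 : Fin (2*kk+3)) :: vR kk
    = (List.range (2*kk+2+1)).map (fun i => ((i : ℕ) : Fin (2*kk+3))) := by
  rw [List.range_succ_eq_map, List.map_cons, List.map_map]
  simp only [Nat.cast_zero]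
  congr 1

lemma cons0L (kk : ℕ) : (0 : Fin (2*kk+3)) :: vL kk
    = (List.range (2*kk+2+1)).map (fun i => -((i : ℕ) : Fin (2*kk+3))) := by
  rw [List.range_succ_eq_map, List.map_cons, List.map_map]
  simp only [Nat.cast_zero, neg_zero]
  congr 1

lemma chainR (kk : ℕ) : List.Chain (cycleGraph (2*kk+3)).Adj 0 (vR kk) := by
  have h1 : List.Chain' (cycleGraph (2*kk+3)).Adj
      ((List.range (2*kk+2+1)).map (fun i => ((i : ℕ) : Fin (2*kk+3)))) := by
    unfold List.Chain'; rw [List.isChain_map, List.isChain_range_succ]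
    intro m _
    have : ((m+1 : ℕ) : Fin (2*kk+3)) = ((m : ℕ) : Fin (2*kk+3)) + 1 := by push_cast; ring
    have h2 := cyc_adj_succ kk ((m : ℕ) : Fin (2*kk+3))
    rw [← this] at h2
    exact h2
  rw [← cons0R] at h1
  exact h1

lemma chainL (kk : ℕ) : List.Chain (cycleGraph (2*kk+3)).Adj 0 (vL kk) := by
  have h1 : List.Chain' (cycleGraph (2*kk+3)).Adj
      ((List.range (2*kk+2+1)).map (fun i => -((i : ℕ) : Fin (2*kk+3)))) := by
    unfold List.Chain'; rw [List.isChain_map, List.isChain_range_succ]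
    intro m _
    have heq : -((m : ℕ) : Fin (2*kk+3)) = -((m+1 : ℕ) : Fin (2*kk+3)) + 1 := by push_cast; ring
    have h2 := cyc_adj_succ kk (-((m+1 : ℕ) : Fin (2*kk+3)))
    rw [← heq] at h2
    exact h2.symm
  rw [← cons0L] at h1
  exact h1

lemma nodupR (kk : ℕ) : ((0 : Fin (2*kk+3)) :: vR kk).Nodup := by
  rw [cons0R]
  apply List.Nodup.map_on _ List.nodup_range
  intro x hx y hy hxy
  rw [List.mem_range] at hx hy
  have h1 : ((x : ℕ) : Fin (2*kk+3)).val = x := Fin.val_cast_of_lt (by omega)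
  have h2 : ((y : ℕ) : Fin (2*kk+3)).val = y := Fin.val_cast_of_lt (by omega)
  rw [← h1, ← h2, hxy]

lemma nodupL (kk : ℕ) : ((0 : Fin (2*kk+3)) :: vL kk).Nodup := by
  rw [cons0L]
  apply List.Nodup.map_on _ List.nodup_range
  intro x hx y hy hxy
  rw [List.mem_range] at hx hy
  have hxy' : ((x : ℕ) : Fin (2*kk+3)) = ((y : ℕ) : Fin (2*kk+3)) := neg_inj.mp hxy
  have h1 : ((x : ℕ) : Fin (2*kk+3)).val = x := Fin.val_cast_of_lt (by omega)
  have h2 : ((y : ℕ) : Fin (2*kk+3)).val = y := Fin.val_cast_of_lt (by omega)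
  rw [← h1, ← h2, hxy']

lemma vLrev (kk : ℕ) : vL kk = (vR kk).reverse := by
  apply List.ext_getElem
  · simp [vL, vR]
  · intro i hi hi2
    have hilt : i < 2*kk+2 := by simpa [vL] using hi
    simp only [vL, vR]
    rw [List.getElem_reverse]
    simp only [List.getElem_map, List.getElem_range, List.length_map, List.length_range]
    apply (eq_neg_of_add_eq_zero_left _).symm
    have harith : 2*kk+2-1-i + 1 + (i + 1) = 2*kk+3 := by omega
    rw [← Nat.cast_add, harith, Fin.natCast_self]

lemma list_sum_map_range (m : ℕ) (f : ℕ → ℕ) :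
    ((List.range m).map f).sum = ∑ i ∈ Finset.range m, f i := by
  induction m with
  | zero => simp
  | succ m ih => rw [List.range_succ, Finset.sum_range_succ, List.map_append, List.sum_append, ih]; simp

lemma sumP (kk : ℕ) (p : Fin (2*kk+3) → ℕ) :
    ∑ v, p v = p 0 + ((vR kk).map p).sum := by
  have h1 : ∑ v : Fin (2*kk+3), p v = ∑ i ∈ Finset.range (2*kk+3), p ((i : ℕ) : Fin (2*kk+3)) := by
    rw [← Fin.sum_univ_eq_sum_range (fun i => p ((i : ℕ) : Fin (2*kk+3))) (2*kk+3)]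
    apply Finset.sum_congr rfl
    intro x _
    rw [Fin.cast_val_eq_self]
  have h2 : ((vR kk).map p).sum = ∑ i ∈ Finset.range (2*kk+2), p ((i+1 : ℕ) : Fin (2*kk+3)) := by
    unfold vR
    rw [List.map_map]
    exact list_sum_map_range _ _
  rw [h1, h2, Finset.sum_range_succ' (fun i => p ((i : ℕ) : Fin (2*kk+3))) (2*kk+2)]
  simp [add_comm]

lemma splitz (kk : ℕ) (f : ℕ → ℕ) :
    (List.range (2*kk+2)).map f
      = (List.range kk).map f ++ f kk :: f (kk+1) ::
        (List.range kk).map (fun i => f (kk+2+i)) := by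
  have h1 : 2*kk+2 = kk + (2 + kk) := by omega
  have h2 : List.range 2 = [0, 1] := by decide
  rw [h1, List.range_add, List.range_add, h2]
  simp only [List.map_append, List.map_map, List.map_cons, List.map_nil, Function.comp_def,
    List.cons_append, List.nil_append]
  rw [show kk + 0 = kk by omega]
  have h3 : List.map (fun x => f (kk + (2 + x))) (List.range kk)
      = List.map (fun i => f (kk+2+i)) (List.range kk) := by
    apply List.map_congr_left
    intro i _
    congr 1
    omega
  rw [h3]

/-! ### Lower bound: the unsolvable configuration -/

lemma sum_split {n : ℕ} [NeZero n] (a b : Fin n) (hab : a ≠ b) (f : Fin n → ℕ) :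
    ∑ x, f x = ∑ x ∈ Finset.univ \ {a, b}, f x + (f a + f b) := by
  rw [← Finset.sum_pair hab, Finset.sum_sdiff (by simp)]

lemma sum_move {n : ℕ} [NeZero n] (q w : Fin n → ℕ) (u v : Fin n) (huv : u ≠ v) (hu : 2 ≤ q u) :
    (∑ x, (if x = u then q u - 2 else if x = v then q v + 1 else q x) * w x) + 2 * w u
    = (∑ x, q x * w x) + w v := by
  rw [sum_split u v huv (fun x => (if x = u then q u - 2 else if x = v then q v + 1 else q x) * w x),
      sum_split u v huv (fun x => q x * w x)]
  have hdiff : ∑ x ∈ Finset.univ \ {u, v},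
      (if x = u then q u - 2 else if x = v then q v + 1 else q x) * w x
      = ∑ x ∈ Finset.univ \ {u, v}, q x * w x := by
    apply Finset.sum_congr rfl
    intro x hx
    simp only [Finset.mem_sdiff, Finset.mem_insert, Finset.mem_singleton] at hx
    have hxu : x ≠ u := by tauto
    have hxv : x ≠ v := by tauto
    simp [hxu, hxv]
  rw [hdiff]
  rw [show (if u = u then q u - 2 else if u = v then q v + 1 else q u) = q u - 2 by simp,
      show (if v = u then q u - 2 else if v = v then q v + 1 else q v) = q v + 1 by
        simp [Ne.symm huv]]
  have h1 : (q u - 2) * w u + 2 * w u = q u * w u := by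
    have h : (q u - 2) + 2 = q u := by omega
    calc (q u - 2) * w u + 2 * w u = ((q u - 2) + 2) * w u := by ring
      _ = q u * w u := by rw [h]
  have h2 : (q v + 1) * w v = q v * w v + w v := by ring
  omega

lemma adj_cases (kk : ℕ) {u v : Fin (2*kk+3)} (h : (cycleGraph (2*kk+3)).Adj u v) :
    (u.val + 1 = v.val) ∨ (v.val + 1 = u.val) ∨ (u.val = 0 ∧ v.val = 2*kk+2)
      ∨ (v.val = 0 ∧ u.val = 2*kk+2) := by
  rw [cycleGraph_adj'] at h
  have hone : (1 : Fin (2*kk+3)).val = 1 := by simp [Fin.val_one]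
  rcases h with h | h
  · have h1 : u - v = 1 := Fin.ext (by rw [h, hone])
    have h2 : u = v + 1 := by
      have := sub_eq_iff_eq_add.mp h1
      exact this.trans (add_comm 1 v)
    have h3 : u.val = if v = Fin.last (2*kk+2) then 0 else v.val + 1 := by
      rw [h2]; exact Fin.val_add_one v
    split_ifs at h3 with hl
    · right; right; left
      exact ⟨h3, by rw [hl]; rfl⟩
    · right; left; omega
  · have h1 : v - u = 1 := Fin.ext (by rw [h, hone])
    have h2 : v = u + 1 := by
      have := sub_eq_iff_eq_add.mp h1
      exact this.trans (add_comm 1 u)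
    have h3 : v.val = if u = Fin.last (2*kk+2) then 0 else u.val + 1 := by
      rw [h2]; exact Fin.val_add_one u
    split_ifs at h3 with hl
    · right; right; right
      exact ⟨h3, by rw [hl]; rfl⟩
    · left; omega

def wRf (kk : ℕ) (x : Fin (2*kk+3)) : ℕ := 2^(2*kk+2 - x.val)
def wLf (kk : ℕ) (x : Fin (2*kk+3)) : ℕ := 2^(x.val - 1)

def conf0 (kk : ℕ) : Fin (2*kk+3) → ℕ := fun x =>
  if x = ((kk+1 : ℕ) : Fin (2*kk+3)) then 2^(kk+2)/3
  else if x = ((kk+2 : ℕ) : Fin (2*kk+3)) then 2^(kk+2)/3 else 0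

lemma conf0_facts (kk : ℕ) :
    conf0 kk 0 = 0 ∧ ∑ v, conf0 kk v = 2 * (2^(kk+2)/3) ∧
    (∑ x, conf0 kk x * wRf kk x) = (2^(kk+2)/3) * 2^(kk+1) + (2^(kk+2)/3) * 2^kk ∧
    (∑ x, conf0 kk x * wLf kk x) = (2^(kk+2)/3) * 2^(kk+1) + (2^(kk+2)/3) * 2^kk := by
  set t := 2^(kk+2)/3 with ht
  set K : Fin (2*kk+3) := ((kk+1 : ℕ) : Fin (2*kk+3)) with hK
  set K1 : Fin (2*kk+3) := ((kk+2 : ℕ) : Fin (2*kk+3)) with hK1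
  have hKval : K.val = kk+1 := Fin.val_cast_of_lt (by omega)
  have hK1val : K1.val = kk+2 := Fin.val_cast_of_lt (by omega)
  have hKK1 : K ≠ K1 := by
    intro hc
    rw [hc] at hKval
    omega
  have h0K : (0 : Fin (2*kk+3)) ≠ K := by
    intro hc
    rw [← hc, Fin.val_zero] at hKval
    omega
  have h0K1 : (0 : Fin (2*kk+3)) ≠ K1 := by
    intro hc
    rw [← hc, Fin.val_zero] at hK1val
    omega
  have hc0 : conf0 kk 0 = 0 := by simp [conf0, ← hK, ← hK1, h0K, h0K1]
  have hcK : conf0 kk K = t := by simp [conf0, ← hK, ← hK1, ← ht]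
  have hcK1 : conf0 kk K1 = t := by simp [conf0, ← hK, ← hK1, Ne.symm hKK1, ← ht]
  have hczero : ∀ x : Fin (2*kk+3), x ≠ K → x ≠ K1 → conf0 kk x = 0 := by
    intro x h1 h2
    simp [conf0, ← hK, ← hK1, h1, h2]
  have hsplit : ∀ g : Fin (2*kk+3) → ℕ,
      (∑ x, conf0 kk x * g x) = conf0 kk K * g K + conf0 kk K1 * g K1 := by
    intro g
    rw [sum_split K K1 hKK1]
    have hdz : ∑ x ∈ Finset.univ \ {K, K1}, conf0 kk x * g x = 0 := by
      apply Finset.sum_eq_zero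
      intro x hx
      simp only [Finset.mem_sdiff, Finset.mem_insert, Finset.mem_singleton] at hx
      have h1 : x ≠ K := by tauto
      have h2 : x ≠ K1 := by tauto
      rw [hczero x h1 h2, zero_mul]
    rw [hdz, zero_add]
  refine ⟨hc0, ?_, ?_, ?_⟩
  · rw [sum_split K K1 hKK1]
    have hdz : ∑ x ∈ Finset.univ \ {K, K1}, conf0 kk x = 0 := by
      apply Finset.sum_eq_zero
      intro x hx
      simp only [Finset.mem_sdiff, Finset.mem_insert, Finset.mem_singleton] at hx
      have h1 : x ≠ K := by tauto
      have h2 : x ≠ K1 := by tauto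
      exact hczero x h1 h2
    rw [hdz, zero_add, hcK, hcK1]
    ring
  · rw [hsplit (wRf kk), hcK, hcK1]
    have e1 : wRf kk K = 2^(kk+1) := by
      unfold wRf
      rw [hKval, show 2*kk+2-(kk+1) = kk+1 by omega]
    have e2 : wRf kk K1 = 2^kk := by
      unfold wRf
      rw [hK1val, show 2*kk+2-(kk+2) = kk by omega]
    rw [e1, e2]
  · rw [hsplit (wLf kk), hcK, hcK1]
    have e1 : wLf kk K = 2^kk := by
      unfold wLf
      rw [hKval, show kk+1-1 = kk by omega]
    have e2 : wLf kk K1 = 2^(kk+1) := by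
      unfold wLf
      rw [hK1val, show kk+2-1 = kk+1 by omega]
    rw [e1, e2]
    ring

lemma conf0_unsolvable (kk : ℕ) : ¬ Solvable (cycleGraph (2*kk+3)) 0 (conf0 kk) := by
  rintro ⟨q, hq, hq1⟩
  obtain ⟨hc0, -, hRinit, hLinit⟩ := conf0_facts kk
  set t := 2^(kk+2)/3 with ht
  have htmod : 3 * t + 2^(kk+2) % 3 = 2^(kk+2) := by rw [ht]; omega
  have htm := three_not_dvd_pow2 (kk + 2)
  have htm2 : 2^(kk+2) % 3 < 3 := Nat.mod_lt _ (by norm_num)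
  have h3t : 3 * t ≤ 2^(kk+2) - 1 := by omega
  have hbound : t * 2^(kk+1) + t * 2^kk < 2^(2*kk+2) := by
    have h3t1 : 3*t + 1 ≤ 2^(kk+2) := by omega
    have e2 : (3*t+1)*2^kk ≤ 2^(kk+2)*2^kk := Nat.mul_le_mul_right _ h3t1
    have e1 : t * 2^(kk+1) + t * 2^kk + 2^kk = (3*t+1)*2^kk := by rw [pow_succ]; ring
    have e4 : 2^(kk+2)*2^kk = 2^(2*kk+2) := by rw [← pow_add]; congr 1; omega
    have e5 : (1:ℕ) ≤ 2^kk := Nat.one_le_two_pow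
    omega
  have hB2 : 2^(2*kk+2) = 2 * 2^(2*kk+1) := by rw [pow_succ]; ring
  have hpres : ∀ q1 q2, PebMove (cycleGraph (2*kk+3)) q1 q2 →
      (q1 0 = 0 ∧ (∑ x, q1 x * wRf kk x) < 2^(2*kk+2) ∧ (∑ x, q1 x * wLf kk x) < 2^(2*kk+2)) →
      (q2 0 = 0 ∧ (∑ x, q2 x * wRf kk x) < 2^(2*kk+2) ∧ (∑ x, q2 x * wLf kk x) < 2^(2*kk+2)) := by
    rintro q1 q2 ⟨a, b, hadj, ha2, rfl⟩ ⟨hq0, hRb, hLb⟩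
    have hab : a ≠ b := hadj.ne
    have ha0 : a ≠ 0 := by rintro rfl; omega
    have ha0v : a.val ≠ 0 := by
      intro hc
      exact ha0 (Fin.ext (by rw [hc, Fin.val_zero]))
    have hbval : b.val < 2*kk+3 := b.isLt
    have haval : a.val < 2*kk+3 := a.isLt
    have hcases := adj_cases kk hadj
    by_cases hb0 : b = 0
    · exfalso
      have hb0v : b.val = 0 := by rw [hb0, Fin.val_zero]
      rcases hcases with h | h | h | h
      · omega
      · have hav1 : a.val = 1 := by omega
        have hterm : q1 a * wRf kk a ≤ ∑ x, q1 x * wRf kk x :=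
          Finset.single_le_sum (f := fun x => q1 x * wRf kk x)
            (fun i _ => Nat.zero_le _) (Finset.mem_univ a)
        have hwa : wRf kk a = 2^(2*kk+1) := by
          unfold wRf
          rw [hav1, show 2*kk+2-1 = 2*kk+1 by omega]
        have hge : 2*2^(2*kk+1) ≤ q1 a * wRf kk a := by
          rw [hwa]; exact Nat.mul_le_mul_right _ ha2
        omega
      · omega
      · have hterm : q1 a * wLf kk a ≤ ∑ x, q1 x * wLf kk x :=
          Finset.single_le_sum (f := fun x => q1 x * wLf kk x)
            (fun i _ => Nat.zero_le _) (Finset.mem_univ a)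
        have hwa : wLf kk a = 2^(2*kk+1) := by
          unfold wLf
          rw [h.2, show 2*kk+2-1 = 2*kk+1 by omega]
        have hge : 2*2^(2*kk+1) ≤ q1 a * wLf kk a := by
          rw [hwa]; exact Nat.mul_le_mul_right _ ha2
        omega
    · have hb0v : b.val ≠ 0 := by
        intro hc
        exact hb0 (Fin.ext (by rw [hc, Fin.val_zero]))
      refine ⟨?_, ?_, ?_⟩
      · show (if (0:Fin (2*kk+3)) = a then q1 a - 2
            else if (0:Fin (2*kk+3)) = b then q1 b + 1 else q1 0) = 0
        rw [if_neg (Ne.symm ha0), if_neg (Ne.symm hb0)]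
        exact hq0
      · show (∑ x, (if x = a then q1 a - 2 else if x = b then q1 b + 1 else q1 x) * wRf kk x)
            < 2^(2*kk+2)
        have hid := sum_move q1 (wRf kk) a b hab ha2
        have hwb : wRf kk b ≤ 2 * wRf kk a := by
          unfold wRf
          rcases hcases with h | h | h | h
          · have := Nat.pow_le_pow_right (show 1 ≤ 2 by norm_num)
              (show 2*kk+2 - b.val ≤ 2*kk+2 - a.val by omega)
            omega
          · rw [show 2*kk+2 - b.val = (2*kk+2 - a.val) + 1 by omega, pow_succ]
            omega
          · omega
          · omega
        omega
      · show (∑ x, (if x = a then q1 a - 2 else if x = b then q1 b + 1 else q1 x) * wLf kk x)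
            < 2^(2*kk+2)
        have hid := sum_move q1 (wLf kk) a b hab ha2
        have hwb : wLf kk b ≤ 2 * wLf kk a := by
          unfold wLf
          rcases hcases with h | h | h | h
          · rw [show b.val - 1 = (a.val - 1) + 1 by omega, pow_succ]
            omega
          · have := Nat.pow_le_pow_right (show 1 ≤ 2 by norm_num)
              (show b.val - 1 ≤ a.val - 1 by omega)
            omega
          · omega
          · omega
        omega
  have hinv : q 0 = 0 ∧ (∑ x, q x * wRf kk x) < 2^(2*kk+2) ∧ (∑ x, q x * wLf kk x) < 2^(2*kk+2) := by
    clear hq1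
    induction hq with
    | refl => exact ⟨hc0, by rw [hRinit]; exact hbound, by rw [hLinit]; exact hbound⟩
    | tail hsteps hstep ih => exact hpres _ _ hstep ih
  omega

/-! ### Upper bound for root 0 -/

lemma solv0 (kk : ℕ) (p : Fin (2*kk+3) → ℕ) (hp : 2*(2^(kk+2)/3)+1 ≤ ∑ v, p v) :
    Solvable (cycleGraph (2*kk+3)) 0 p := by
  by_contra hns
  have h0 : p 0 = 0 := by
    by_contra h
    exact hns ⟨p, Relation.ReflTransGen.refl, by omega⟩
  have hA2 : foldPb ((vR kk).map p) ≤ 1 := by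
    by_contra h
    push_neg at h
    exact hns (solvable_of_fold 0 (vR kk) p (chainR kk) (nodupR kk) h)
  have hB2 : foldPb (((vR kk).map p).reverse) ≤ 1 := by
    rw [← List.map_reverse, ← vLrev]
    by_contra h
    push_neg at h
    exact hns (solvable_of_fold 0 (vL kk) p (chainL kk) (nodupL kk) h)
  set f : ℕ → ℕ := fun i => p ((i+1 : ℕ) : Fin (2*kk+3)) with hf
  have hvRmap : (vR kk).map p = (List.range (2*kk+2)).map f := by
    unfold vR
    rw [List.map_map, hf]
    rfl
  rw [hvRmap, splitz kk f] at hA2 hB2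
  have hcore := coreLemma kk _ _ (f kk) (f (kk+1)) (by simp) (by simp) hA2 hB2
  have hsum := sumP kk p
  rw [hvRmap, splitz kk f] at hsum
  omega

/-! ### Main theorem -/

theorem stmt5' (k : ℕ) (hk : 1 ≤ k) :
    sInf {N | ∀ (r : Fin (2*k+1)) (p : Fin (2*k+1) → ℕ), N ≤ ∑ v, p v →
      Solvable (cycleGraph (2*k+1)) r p} = 2 * (2 ^ (k + 1) / 3) + 1 := by
  obtain ⟨kk, rfl⟩ : ∃ kk, k = kk + 1 := ⟨k - 1, by omega⟩
  have hn : 2 * (kk + 1) + 1 = 2 * kk + 3 := by ring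
  rw [hn]
  show sInf {N | ∀ (r : Fin (2*kk+3)) (p : Fin (2*kk+3) → ℕ), N ≤ ∑ v, p v →
      Solvable (cycleGraph (2*kk+3)) r p} = 2 * (2 ^ (kk + 2) / 3) + 1
  have hmem : (2*(2^(kk+2)/3)+1) ∈ {N | ∀ (r : Fin (2*kk+3)) (p : Fin (2*kk+3) → ℕ),
      N ≤ ∑ v, p v → Solvable (cycleGraph (2*kk+3)) r p} := by
    intro r p hsum
    have hadjpres : ∀ a b : Fin (2*kk+3), (cycleGraph (2*kk+3)).Adj a b →
        (cycleGraph (2*kk+3)).Adj ((Equiv.addRight r) a) ((Equiv.addRight r) b) := by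
      intro a b hab
      rw [cycleGraph_adj'] at hab ⊢
      simpa using hab
    have hrot : Solvable (cycleGraph (2*kk+3)) 0 (p ∘ (Equiv.addRight r)) := by
      apply solv0
      have : ∑ v, (p ∘ (Equiv.addRight r)) v = ∑ v, p v := Equiv.sum_comp _ _
      omega
    have htrans := solvable_transport (Equiv.addRight r) hadjpres 0 p hrot
    have h0r : (Equiv.addRight r) 0 = r := by simp
    rwa [h0r] at htrans
  have hlow : ∀ N ∈ {N | ∀ (r : Fin (2*kk+3)) (p : Fin (2*kk+3) → ℕ),
      N ≤ ∑ v, p v → Solvable (cycleGraph (2*kk+3)) r p}, 2*(2^(kk+2)/3)+1 ≤ N := by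
    intro N hN
    by_contra hc
    push_neg at hc
    apply conf0_unsolvable kk
    apply hN 0
    obtain ⟨-, hcsum, -, -⟩ := conf0_facts kk
    omega
  exact le_antisymm (Nat.sInf_le hmem) (le_csInf ⟨_, hmem⟩ hlow)

theorem stmt5 (k : ℕ) (hk : 1 ≤ k) :
    pebblingNumber (cycleGraph (2 * k + 1)) = 2 * (2 ^ (k + 1) / 3) + 1 := by
  have h := stmt5' k hk
  unfold pebblingNumber
  exact h
end

section
/- For every positive integer k, there exists a root vertex r of the odd cycle C_{2k+1} and a configuration with 2·⌊2^{k+1}/3⌋ pebbles that is r-unsolvable; specifically, placing ⌊2^{k+1}/3⌋ pebbles on each of the two vertices at distance k from r is r-unsolvable. -/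
open SimpleGraph Finset

namespace Stmt6Aux

open Fin.NatCast Fin.CommRing

lemma mod_two_n (a n : ℕ) (h : a < 2*n) : a % n = if a < n then a else a - n := by
  split_ifs with h1
  · exact Nat.mod_eq_of_lt h1
  · rw [Nat.mod_eq_sub_mod (by omega)]
    exact Nat.mod_eq_of_lt (by omega)

lemma pow_le_two_mul_pow {s t : ℕ} (h : s ≤ t + 1) : (2:ℕ)^s ≤ 2 * 2^t := by
  calc (2:ℕ)^s ≤ 2^(t+1) := Nat.pow_le_pow_right (by norm_num) h
  _ = 2*2^t := by rw [pow_succ]; ring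

variable {k : ℕ}

/-- circular norm on `Fin (2k+1)`. -/
def cnorm (k : ℕ) (x : Fin (2*k+1)) : ℕ := min x.val (2*k+1 - x.val)

lemma val_one' (hk : 1 ≤ k) : ((1 : Fin (2*k+1))).val = 1 := by
  have : (1 : Fin (2*k+1)) = ((1:ℕ) : Fin (2*k+1)) := by norm_cast
  rw [this, Fin.val_natCast]
  exact Nat.mod_eq_of_lt (by omega)

lemma adj_succ (hk : 1 ≤ k) (x : Fin (2*k+1)) : (cycleGraph (2*k+1)).Adj x (x+1) := by
  rw [cycleGraph_adj']
  right
  have h : x + 1 - x = 1 := by ring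
  rw [h, val_one' hk]

lemma adj_pred (hk : 1 ≤ k) (x : Fin (2*k+1)) : (cycleGraph (2*k+1)).Adj x (x-1) := by
  rw [cycleGraph_adj']
  left
  have h : x - (x - 1) = 1 := by ring
  rw [h, val_one' hk]

lemma exists_walk_pos (hk : 1 ≤ k) (j : ℕ) :
    ∃ w : (cycleGraph (2*k+1)).Walk 0 ((j : Fin (2*k+1))), w.length = j := by
  induction j with
  | zero => exact ⟨SimpleGraph.Walk.nil.copy rfl (by norm_cast), by simp⟩
  | succ j ih =>
    obtain ⟨w, hw⟩ := ih
    refine ⟨(w.concat (adj_succ hk _)).copy rfl (by push_cast; ring), ?_⟩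
    simp [SimpleGraph.Walk.length_concat, hw]

lemma exists_walk_neg (hk : 1 ≤ k) (j : ℕ) :
    ∃ w : (cycleGraph (2*k+1)).Walk 0 (-(j : Fin (2*k+1))), w.length = j := by
  induction j with
  | zero => exact ⟨SimpleGraph.Walk.nil.copy rfl (by norm_num), by simp⟩
  | succ j ih =>
    obtain ⟨w, hw⟩ := ih
    refine ⟨(w.concat (adj_pred hk _)).copy rfl (by push_cast; ring), ?_⟩
    simp [SimpleGraph.Walk.length_concat, hw]

lemma cnorm_lip_add (hk : 1 ≤ k) (x : Fin (2*k+1)) : cnorm k (x+1) ≤ cnorm k x + 1 := by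
  have hx := x.isLt
  unfold cnorm
  rw [Fin.add_def]
  simp only
  rw [val_one' hk, mod_two_n _ _ (by omega)]
  simp only [Nat.min_def]
  split_ifs <;> omega

lemma cnorm_lip_sub (hk : 1 ≤ k) (x : Fin (2*k+1)) : cnorm k (x-1) ≤ cnorm k x + 1 := by
  have hx := x.isLt
  unfold cnorm
  rw [Fin.sub_def]
  simp only
  rw [val_one' hk, mod_two_n _ _ (by omega)]
  simp only [Nat.min_def]
  split_ifs <;> omega

lemma walk_lb (hk : 1 ≤ k) {u v : Fin (2*k+1)} (w : (cycleGraph (2*k+1)).Walk u v) :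
    cnorm k (v - u) ≤ w.length := by
  induction w with
  | nil => simp [cnorm]
  | @cons a b c h w ih =>
    rw [cycleGraph_adj'] at h
    rcases h with h | h
    · have hab : a - b = 1 := by
        ext; rw [h, val_one' hk]
      have hvu : c - a = (c - b) - 1 := by rw [← hab]; ring
      rw [hvu]
      calc cnorm k (c - b - 1) ≤ cnorm k (c - b) + 1 := cnorm_lip_sub hk _
      _ ≤ w.length + 1 := by omega
      _ = (SimpleGraph.Walk.cons _ w).length := by simp [SimpleGraph.Walk.length_cons]
    · have hab : b - a = 1 := by
        ext; rw [h, val_one' hk]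
      have hvu : c - a = (c - b) + 1 := by rw [← hab]; ring
      rw [hvu]
      calc cnorm k (c - b + 1) ≤ cnorm k (c - b) + 1 := cnorm_lip_add hk _
      _ ≤ w.length + 1 := by omega
      _ = (SimpleGraph.Walk.cons _ w).length := by simp [SimpleGraph.Walk.length_cons]

lemma dist_eq (hk : 1 ≤ k) (v : Fin (2*k+1)) :
    (cycleGraph (2*k+1)).dist 0 v = cnorm k v := by
  have hv := v.isLt
  obtain ⟨w1', hw1'⟩ := exists_walk_pos hk (v.val)
  let w1 := w1'.copy rfl (Fin.cast_val_eq_self v)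
  have hw1 : w1.length = v.val := by simpa [w1] using hw1'
  obtain ⟨w2', hw2'⟩ := exists_walk_neg hk (2*k+1 - v.val)
  have hcast : -(((2*k+1 - v.val : ℕ)) : Fin (2*k+1)) = v := by
    rw [Nat.cast_sub (by omega)]
    simp [Fin.cast_val_eq_self]
  let w2 := w2'.copy rfl hcast
  have hw2 : w2.length = 2*k+1 - v.val := by simpa [w2] using hw2'
  apply le_antisymm
  · apply le_min
    · calc (cycleGraph (2*k+1)).dist 0 v ≤ w1.length := SimpleGraph.dist_le w1
      _ = v.val := hw1
    · calc (cycleGraph (2*k+1)).dist 0 v ≤ w2.length := SimpleGraph.dist_le w2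
      _ = 2*k+1 - v.val := hw2
  · have hr : (cycleGraph (2*k+1)).Reachable 0 v := ⟨w1⟩
    obtain ⟨w, hw⟩ := hr.exists_walk_length_eq_dist
    have := walk_lb hk w
    rw [sub_zero] at this
    omega


/-- the two potentials' weights: `e = 1` and `e = 0`. -/
def wgt (k e : ℕ) (x : Fin (2*k+1)) : ℕ :=
  if x.val = 0 then 3 * 2^k
  else if x.val ≤ k then 2^(k + e - x.val)
  else 2^(x.val - k - e)

def confW (w : Fin (2*k+1) → ℕ) (p : Fin (2*k+1) → ℕ) : ℤ := ∑ v, (p v : ℤ) * w v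

/-- adjacency in terms of values -/
lemma adj_vals (hk : 1 ≤ k) {u v : Fin (2*k+1)} (h : (cycleGraph (2*k+1)).Adj u v) :
    u.val = v.val + 1 ∨ v.val = u.val + 1 ∨ (u.val = 0 ∧ v.val = 2*k) ∨
      (v.val = 0 ∧ u.val = 2*k) := by
  have hu := u.isLt
  have hv := v.isLt
  rw [cycleGraph_adj'] at h
  rcases h with h | h
  · rw [Fin.sub_def] at h
    simp only at h
    rw [mod_two_n _ _ (by omega)] at h
    split_ifs at h <;> omega
  · rw [Fin.sub_def] at h
    simp only at h
    rw [mod_two_n _ _ (by omega)] at h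
    split_ifs at h <;> omega

lemma wgt_le (hk : 1 ≤ k) {e : ℕ} (he : e ≤ 1) {u v : Fin (2*k+1)}
    (h : (cycleGraph (2*k+1)).Adj u v) (hv : v.val ≠ 0) :
    wgt k e v ≤ 2 * wgt k e u := by
  have hu := u.isLt
  have hv' := v.isLt
  have hvals := adj_vals hk h
  unfold wgt
  have h3 : ∀ s : ℕ, s ≤ k + 1 → (2:ℕ)^s ≤ 2 * (3 * 2^k) := by
    intro s hs
    calc (2:ℕ)^s ≤ 2 * 2^k := pow_le_two_mul_pow hs
    _ ≤ 2 * (3 * 2^k) := by nlinarith [(show 0 < 2^k by positivity)]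
  split_ifs with h1 h2 h3' h4 h5 h6 h7 <;>
    first
      | omega
      | (apply pow_le_two_mul_pow; omega)
      | (apply h3; omega)

lemma confW_move {p q : Fin (2*k+1) → ℕ} {u v : Fin (2*k+1)} (w : Fin (2*k+1) → ℕ)
    (huv : u ≠ v) (h2 : 2 ≤ p u)
    (hq : q = fun x => if x = u then p u - 2 else if x = v then p v + 1 else p x) :
    confW w q = confW w p - 2 * w u + w v := by
  subst hq
  unfold confW
  have key : ∀ x : Fin (2*k+1),
      ((if x = u then p u - 2 else if x = v then p v + 1 else p x : ℕ) : ℤ) * w x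
      = (p x : ℤ) * w x + ((if x = u then -2 * (w u : ℤ) else 0)
          + (if x = v then (w v : ℤ) else 0)) := by
    intro x
    by_cases hx : x = u
    · subst hx
      rw [if_pos rfl, if_pos rfl, if_neg huv]
      have : ((p x - 2 : ℕ) : ℤ) = (p x : ℤ) - 2 := by
        rw [Nat.cast_sub h2]; norm_num
      rw [this]; ring
    · rw [if_neg hx, if_neg hx]
      by_cases hx2 : x = v
      · subst hx2
        rw [if_pos rfl, if_pos rfl]
        push_cast
        ring
      · rw [if_neg hx2, if_neg hx2]
        ring
  rw [Finset.sum_congr rfl (fun x _ => key x)]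
  rw [Finset.sum_add_distrib, Finset.sum_add_distrib, Finset.sum_ite_eq',
    Finset.sum_ite_eq']
  simp only [Finset.mem_univ, if_true]
  ring

lemma confW_lb (w p : Fin (2*k+1) → ℕ) (x : Fin (2*k+1)) :
    (p x : ℤ) * w x ≤ confW w p := by
  apply Finset.single_le_sum (f := fun v => (p v : ℤ) * w v)
  · intro i _
    positivity
  · exact Finset.mem_univ x

lemma inv_step (hk : 1 ≤ k) {c : ℕ} (h3c : 3 * c < 2^(k+1)) {p q : Fin (2*k+1) → ℕ}
    (hm : PebMove (cycleGraph (2*k+1)) p q)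
    (h3 : confW (wgt k 1) p ≤ 3*c) (h4 : confW (wgt k 0) p ≤ 3*c) :
    confW (wgt k 1) q ≤ 3*c ∧ confW (wgt k 0) q ≤ 3*c := by
  obtain ⟨u, v, hadj, h2, hq⟩ := hm
  have huv : u ≠ v := hadj.ne
  have e3 := confW_move (wgt k 1) huv h2 hq
  have e4 := confW_move (wgt k 0) huv h2 hq
  have hu := u.isLt
  have hv' := v.isLt
  have hpk : (0:ℤ) < 2^k := by positivity
  have hc : (3 * c : ℤ) < 2^(k+1) := by exact_mod_cast h3c
  rw [pow_succ] at hc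
  by_cases hv : v.val = 0
  · exfalso
    have hq1 : 1 ≤ q v := by
      have hqv : q v = p v + 1 := by
        rw [hq]
        simp [Ne.symm huv]
      omega
    rcases adj_vals hk hadj with h | h | h | h
    · -- u.val = v.val + 1 = 1
      have hwu : wgt k 1 u = 2^k := by
        unfold wgt
        rw [if_neg (by omega), if_pos (by omega)]
        congr 1
        omega
      have hwv : wgt k 1 v = 3 * 2^k := by unfold wgt; rw [if_pos hv]
      have hlow := confW_lb (wgt k 1) q v
      rw [hwv] at hlow
      push_cast at hlow
      rw [hwu, hwv] at e3
      have : (1:ℤ) * (3 * 2^k) ≤ confW (wgt k 1) q := by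
        calc (1:ℤ) * (3 * 2^k) ≤ (q v : ℤ) * (3 * 2^k) := by
              have : (1:ℤ) ≤ (q v : ℤ) := by exact_mod_cast hq1
              nlinarith
        _ ≤ _ := hlow
      push_cast at e3 ⊢
      linarith
    · omega
    · omega
    · -- u.val = 2k, use e = 0 potential
      have hwu : wgt k 0 u = 2^k := by
        unfold wgt
        rw [if_neg (by omega), if_neg (by omega)]
        congr 1
        omega
      have hwv : wgt k 0 v = 3 * 2^k := by unfold wgt; rw [if_pos hv]
      have hlow := confW_lb (wgt k 0) q v
      rw [hwv] at hlow
      push_cast at hlow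
      rw [hwu, hwv] at e4
      have : (1:ℤ) * (3 * 2^k) ≤ confW (wgt k 0) q := by
        calc (1:ℤ) * (3 * 2^k) ≤ (q v : ℤ) * (3 * 2^k) := by
              have : (1:ℤ) ≤ (q v : ℤ) := by exact_mod_cast hq1
              nlinarith
        _ ≤ _ := hlow
      push_cast at e4 ⊢
      linarith
  · have w3 := wgt_le hk (by norm_num) hadj hv (e := 1)
    have w4 := wgt_le hk (by norm_num) hadj hv (e := 0)
    constructor
    · rw [e3]
      have : (wgt k 1 v : ℤ) ≤ 2 * wgt k 1 u := by exact_mod_cast w3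
      linarith
    · rw [e4]
      have : (wgt k 0 v : ℤ) ≤ 2 * wgt k 0 u := by exact_mod_cast w4
      linarith

end Stmt6Aux

open Stmt6Aux in
theorem stmt6 (k : ℕ) (hk : 1 ≤ k) :
    ∃ r : Fin (2 * k + 1),
      (∑ v, (if (cycleGraph (2 * k + 1)).dist r v = k then 2 ^ (k + 1) / 3 else 0)) =
        2 * (2 ^ (k + 1) / 3) ∧
      ¬ Solvable (cycleGraph (2 * k + 1)) r
        (fun v => if (cycleGraph (2 * k + 1)).dist r v = k then 2 ^ (k + 1) / 3 else 0) := by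
  classical
  set c : ℕ := 2 ^ (k + 1) / 3 with hc
  obtain ⟨vk, hvk⟩ : ∃ w : Fin (2*k+1), w.val = k := ⟨⟨k, by omega⟩, rfl⟩
  obtain ⟨vk1, hvk1⟩ : ∃ w : Fin (2*k+1), w.val = k+1 := ⟨⟨k+1, by omega⟩, rfl⟩
  have hne : vk ≠ vk1 := by
    intro h
    rw [Fin.ext_iff, hvk, hvk1] at h
    omega
  have hdist : ∀ v : Fin (2*k+1),
      ((cycleGraph (2*k+1)).dist 0 v = k ↔ (v = vk ∨ v = vk1)) := by
    intro v
    rw [Stmt6Aux.dist_eq hk v]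
    unfold Stmt6Aux.cnorm
    have hv := v.isLt
    simp only [Fin.ext_iff, hvk, hvk1, Nat.min_def]
    constructor
    · intro h
      split_ifs at h <;> omega
    · intro h
      split_ifs <;> omega
  refine ⟨0, ?_, ?_⟩
  · have hsplit : ∀ v : Fin (2*k+1), v ∈ Finset.univ →
        (if (cycleGraph (2*k+1)).dist 0 v = k then c else 0)
        = (if v = vk then c else 0) + (if v = vk1 then c else 0) := by
      intro v _
      by_cases h1 : v = vk
      · rw [if_pos ((hdist v).2 (Or.inl h1)), if_pos h1, if_neg (by rw [h1]; exact hne)]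
        omega
      · by_cases h2 : v = vk1
        · rw [if_pos ((hdist v).2 (Or.inr h2)), if_neg h1, if_pos h2]
          omega
        · rw [if_neg (fun hh => by rcases (hdist v).1 hh with h | h <;> tauto),
            if_neg h1, if_neg h2]
    rw [Finset.sum_congr rfl hsplit, Finset.sum_add_distrib,
      Finset.sum_ite_eq' Finset.univ vk (fun _ => c),
      Finset.sum_ite_eq' Finset.univ vk1 (fun _ => c)]
    simp only [Finset.mem_univ, if_true]
    omega
  · rintro ⟨q, hsteps, hq0⟩
    have h3c : 3 * c < 2^(k+1) := by
      have hdvd : ¬ (3 ∣ 2^(k+1)) := by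
        intro h
        have h2 := (Nat.prime_three).dvd_of_dvd_pow h
        omega
      have hmod : 2^(k+1) % 3 ≠ 0 := fun hh => hdvd (Nat.dvd_of_mod_eq_zero hh)
      omega
    -- weight values at vk, vk1
    have w1k : Stmt6Aux.wgt k 1 vk = 2 := by
      unfold Stmt6Aux.wgt
      rw [hvk, if_neg (by omega), if_pos (by omega)]
      have h : k + 1 - k = 1 := by omega
      rw [h, pow_one]
    have w1k1 : Stmt6Aux.wgt k 1 vk1 = 1 := by
      unfold Stmt6Aux.wgt
      rw [hvk1, if_neg (by omega), if_neg (by omega)]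
      have h : k + 1 - k - 1 = 0 := by omega
      rw [h, pow_zero]
    have w0k : Stmt6Aux.wgt k 0 vk = 1 := by
      unfold Stmt6Aux.wgt
      rw [hvk, if_neg (by omega), if_pos (by omega)]
      have h : k + 0 - k = 0 := by omega
      rw [h, pow_zero]
    have w0k1 : Stmt6Aux.wgt k 0 vk1 = 2 := by
      unfold Stmt6Aux.wgt
      rw [hvk1, if_neg (by omega), if_neg (by omega)]
      have h : k + 1 - k - 0 = 1 := by omega
      rw [h, pow_one]
    have hp0 : ∀ e : ℕ, Stmt6Aux.confW (Stmt6Aux.wgt k e)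
        (fun v => if (cycleGraph (2*k+1)).dist 0 v = k then c else 0)
        = (c : ℤ) * Stmt6Aux.wgt k e vk + (c : ℤ) * Stmt6Aux.wgt k e vk1 := by
      intro e
      unfold Stmt6Aux.confW
      have hsplit : ∀ v : Fin (2*k+1), v ∈ Finset.univ →
          (((if (cycleGraph (2*k+1)).dist 0 v = k then c else 0 : ℕ)) : ℤ)
            * Stmt6Aux.wgt k e v
          = (if v = vk then (c : ℤ) * Stmt6Aux.wgt k e v else 0)
            + (if v = vk1 then (c : ℤ) * Stmt6Aux.wgt k e v else 0) := by
        intro v _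
        by_cases h1 : v = vk
        · rw [if_pos ((hdist v).2 (Or.inl h1)), if_pos h1,
            if_neg (by rw [h1]; exact hne)]
          push_cast
          ring
        · by_cases h2 : v = vk1
          · rw [if_pos ((hdist v).2 (Or.inr h2)), if_neg h1, if_pos h2]
            push_cast
            ring
          · rw [if_neg (fun hh => by rcases (hdist v).1 hh with h | h <;> tauto),
              if_neg h1, if_neg h2]
            push_cast
            ring
      rw [Finset.sum_congr rfl hsplit, Finset.sum_add_distrib,
        Finset.sum_ite_eq' Finset.univ vk (fun v => (c : ℤ) * Stmt6Aux.wgt k e v),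
        Finset.sum_ite_eq' Finset.univ vk1 (fun v => (c : ℤ) * Stmt6Aux.wgt k e v)]
      simp only [Finset.mem_univ, if_true]
    have key : ∀ q' : Fin (2*k+1) → ℕ,
        Relation.ReflTransGen (PebMove (cycleGraph (2*k+1)))
          (fun v => if (cycleGraph (2*k+1)).dist 0 v = k then c else 0) q' →
        Stmt6Aux.confW (Stmt6Aux.wgt k 1) q' ≤ 3*c ∧
          Stmt6Aux.confW (Stmt6Aux.wgt k 0) q' ≤ 3*c := by
      intro q' h
      induction h with
      | refl =>
        constructor
        · rw [hp0 1, w1k, w1k1]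
          push_cast
          linarith
        · rw [hp0 0, w0k, w0k1]
          push_cast
          linarith
      | tail _ hstep ih => exact Stmt6Aux.inv_step hk h3c hstep ih.1 ih.2
    have hinv := key q hsteps
    have hw0 : Stmt6Aux.wgt k 1 (0 : Fin (2*k+1)) = 3 * 2^k := by
      unfold Stmt6Aux.wgt
      have h0 : ((0 : Fin (2*k+1))).val = 0 := rfl
      rw [if_pos h0]
    have hlow := Stmt6Aux.confW_lb (Stmt6Aux.wgt k 1) q 0
    rw [hw0] at hlow
    push_cast at hlow
    have hq1 : (1 : ℤ) ≤ (q 0 : ℤ) := by exact_mod_cast hq0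
    have hpk : (0:ℤ) < 2^k := by positivity
    have hcz : (3 * c : ℤ) < 2^(k+1) := by exact_mod_cast h3c
    rw [pow_succ] at hcz
    nlinarith [hinv.1]
end

section
/- Let G be the graph obtained from the 4-cycle C_4 with vertices a, b, c, d (edges ab, bc, cd, da) by attaching a pendant vertex r adjacent to a. Define w(r)=0, w(a)=2, w(b)=w(d)=2/3, w(c)=1/3. Then w is a valid weight function on G rooted at r: every r-unsolvable configuration p satisfies w(p) ≤ w(1_G) = 11/3. -/
open SimpleGraph Finset

/-- The 4-cycle `a b c d` (vertices `1 2 3 4`) with a pendant root `r = 0` attached to `a`. -/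
def G7 : SimpleGraph (Fin 5) :=
  SimpleGraph.fromRel (fun x y =>
    (x = 0 ∧ y = 1) ∨ (x = 1 ∧ y = 2) ∨ (x = 2 ∧ y = 3) ∨ (x = 3 ∧ y = 4) ∨ (x = 4 ∧ y = 1))

noncomputable def w7 : Fin 5 → ℝ := ![0, 2, 2/3, 1/3, 2/3]

lemma g7_adj10 : G7.Adj 1 0 := by
  rw [G7, SimpleGraph.fromRel_adj]; exact ⟨by decide, by decide⟩
lemma g7_adj21 : G7.Adj 2 1 := by
  rw [G7, SimpleGraph.fromRel_adj]; exact ⟨by decide, by decide⟩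
lemma g7_adj41 : G7.Adj 4 1 := by
  rw [G7, SimpleGraph.fromRel_adj]; exact ⟨by decide, by decide⟩
lemma g7_adj32 : G7.Adj 3 2 := by
  rw [G7, SimpleGraph.fromRel_adj]; exact ⟨by decide, by decide⟩

lemma solv_head {V : Type*} [DecidableEq V] {G : SimpleGraph V} {r : V} {p q : V → ℕ}
    (h : PebMove G p q) (hs : Solvable G r q) : Solvable G r p := by
  obtain ⟨q', hq', hr⟩ := hs
  exact ⟨q', Relation.ReflTransGen.head h hq', hr⟩

lemma g7_key : ∀ n (p : Fin 5 → ℕ), p 2 + p 3 + p 4 ≤ n →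
    12 ≤ 6 * p 1 + 2 * p 2 + p 3 + 2 * p 4 → Solvable G7 0 p := by
  intro n
  induction n with
  | zero =>
    intro p hm hw
    have h1 : 2 ≤ p 1 := by omega
    refine ⟨_, Relation.ReflTransGen.single ⟨1, 0, g7_adj10, h1, rfl⟩, ?_⟩
    simp
  | succ n ih =>
    intro p hm hw
    by_cases h1 : 2 ≤ p 1
    · refine ⟨_, Relation.ReflTransGen.single ⟨1, 0, g7_adj10, h1, rfl⟩, ?_⟩
      simp
    · by_cases h2 : 2 ≤ p 2
      · refine solv_head ⟨2, 1, g7_adj21, h2, rfl⟩ (ih _ ?_ ?_) <;> simp <;> omega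
      · by_cases h4 : 2 ≤ p 4
        · refine solv_head ⟨4, 1, g7_adj41, h4, rfl⟩ (ih _ ?_ ?_) <;> simp <;> omega
        · have h3 : 2 ≤ p 3 := by omega
          refine solv_head ⟨3, 2, g7_adj32, h3, rfl⟩ (ih _ ?_ ?_) <;> simp <;> omega

theorem stmt7 :
    confWeight w7 (fun _ => 1) = 11 / 3 ∧
    ∀ p : Fin 5 → ℕ, ¬ Solvable G7 0 p → confWeight w7 p ≤ 11 / 3 := by
  constructor
  · simp [confWeight, w7, Fin.sum_univ_five]
    norm_num
  · intro p hns
    by_contra hgt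
    push_neg at hgt
    apply hns
    apply g7_key (p 2 + p 3 + p 4) p le_rfl
    rw [confWeight, Fin.sum_univ_five] at hgt
    simp [w7] at hgt
    have h11 : (11 : ℝ) < 6 * p 1 + 2 * p 2 + p 3 + 2 * p 4 := by
      nlinarith [hgt]
    have : (11 : ℕ) < 6 * p 1 + 2 * p 2 + p 3 + 2 * p 4 := by
      exact_mod_cast h11
    omega
end

section
/- For every n ≥ 2, the pebbling number of the n-dimensional hypercube Q_n equals 2^n. -/
open SimpleGraph Finset

set_option linter.unusedSectionVars false
set_option linter.unusedVariables false

namespace Peb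

variable {V : Type*} [DecidableEq V] {G : SimpleGraph V}

abbrev Reach (G : SimpleGraph V) : (V → ℕ) → (V → ℕ) → Prop :=
  Relation.ReflTransGen (PebMove G)

theorem move_add {p q c : V → ℕ} (h : PebMove G p q) : PebMove G (p + c) (q + c) := by
  obtain ⟨u, v, hadj, hu, rfl⟩ := h
  refine ⟨u, v, hadj, ?_, ?_⟩
  · simp only [Pi.add_apply]; omega
  · funext x
    simp only [Pi.add_apply]
    by_cases hx : x = u
    · subst hx; simp; omega
    · by_cases hx2 : x = v
      · subst hx2; simp [hx]; omega
      · simp [hx, hx2]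

theorem reach_add {p q : V → ℕ} (h : Reach G p q) (c : V → ℕ) : Reach G (p + c) (q + c) := by
  induction h with
  | refl => exact Relation.ReflTransGen.refl
  | tail _ hstep ih => exact ih.tail (move_add hstep)

/-- `SolvableK G r k p`: starting from `p`, can place `k` pebbles on `r`. -/
def SolvableK (G : SimpleGraph V) (r : V) (k : ℕ) (p : V → ℕ) : Prop :=
  ∃ q, Reach G p q ∧ k ≤ q r

theorem solvable_iff {r : V} {p : V → ℕ} : Solvable G r p ↔ SolvableK G r 1 p := Iff.rfl

theorem SolvableK.mono_k {r : V} {k k' : ℕ} {p : V → ℕ} (h : SolvableK G r k p)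
    (hk : k' ≤ k) : SolvableK G r k' p := by
  obtain ⟨q, hq, hk2⟩ := h; exact ⟨q, hq, hk.trans hk2⟩

theorem SolvableK.of_reach {r : V} {k : ℕ} {p p' : V → ℕ} (hr : Reach G p p')
    (h : SolvableK G r k p') : SolvableK G r k p := by
  obtain ⟨q, hq, hk⟩ := h; exact ⟨q, hr.trans hq, hk⟩

theorem SolvableK.add_right {r : V} {k : ℕ} {p : V → ℕ} (h : SolvableK G r k p) (c : V → ℕ) :
    SolvableK G r k (p + c) := by
  obtain ⟨q, hq, hk⟩ := h
  exact ⟨q + c, reach_add hq c, le_add_right hk ..⟩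

theorem SolvableK.add {r : V} {k₁ k₂ : ℕ} {p₁ p₂ : V → ℕ}
    (h₁ : SolvableK G r k₁ p₁) (h₂ : SolvableK G r k₂ p₂) :
    SolvableK G r (k₁ + k₂) (p₁ + p₂) := by
  obtain ⟨q₁, hq₁, hk₁⟩ := h₁
  obtain ⟨q₂, hq₂, hk₂⟩ := h₂
  refine ⟨q₂ + q₁, ?_, ?_⟩
  · exact (reach_add hq₁ p₂).trans (by
      have := reach_add hq₂ q₁
      simpa [add_comm] using this)
  · simp only [Pi.add_apply]; omega

theorem SolvableK.mono {r : V} {k : ℕ} {p p' : V → ℕ} (h : SolvableK G r k p)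
    (hle : p ≤ p') : SolvableK G r k p' := by
  have : p' = p + (p' - p) := by
    funext x
    have h2 : p x ≤ p' x := hle x
    simp only [Pi.add_apply, Pi.sub_apply]; omega
  rw [this]; exact h.add_right _

theorem solvableK_of_mem {r : V} {p : V → ℕ} (h : 1 ≤ p r) : SolvableK G r 1 p :=
  ⟨p, Relation.ReflTransGen.refl, h⟩




section Util
variable [Fintype V]

/-- number of occupied vertices -/
def occ (p : V → ℕ) : ℕ := (Finset.univ.filter fun v => p v ≠ 0).card

theorem occ_le_card (p : V → ℕ) : occ p ≤ Fintype.card V := by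
  classical exact (Finset.card_filter_le _ _)

theorem occ_le_sum (p : V → ℕ) : occ p ≤ ∑ v, p v := by
  classical
  calc occ p = ∑ v ∈ Finset.univ.filter fun v => p v ≠ 0, 1 := by simp [occ]
  _ ≤ ∑ v ∈ Finset.univ.filter fun v => p v ≠ 0, p v :=
      Finset.sum_le_sum (by intro i hi; simp at hi; omega)
  _ ≤ ∑ v, p v := Finset.sum_le_sum_of_subset (Finset.filter_subset _ _)

theorem exists_lt_of_sum_lt' {p q : V → ℕ} (h : ∑ v, p v < ∑ v, q v) : ∃ v, p v < q v := by
  by_contra hc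
  push_neg at hc
  exact absurd (Finset.sum_le_sum fun i _ => hc i) (not_le.mpr h)

/-- between-splitting: extend `p0` to a subconfiguration of `p` with any prescribed sum. -/
theorem exists_between_config (p0 p : V → ℕ) (h0 : p0 ≤ p) {t : ℕ}
    (hm0 : ∑ v, p0 v ≤ t) (hmp : t ≤ ∑ v, p v) :
    ∃ p1, p0 ≤ p1 ∧ p1 ≤ p ∧ ∑ v, p1 v = t := by
  classical
  obtain ⟨d, hd⟩ : ∃ d, t - ∑ v, p0 v = d := ⟨_, rfl⟩
  induction d generalizing p0 with
  | zero => exact ⟨p0, le_refl _, h0, by omega⟩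
  | succ d ih =>
    have hlt : ∑ v, p0 v < ∑ v, p v := by omega
    obtain ⟨v, hv⟩ := exists_lt_of_sum_lt' hlt
    have hup : Function.update p0 v (p0 v + 1) ≤ p := by
      intro w
      by_cases hw : w = v
      · subst hw; simp [Function.update_self]; omega
      · simp [Function.update_of_ne hw]; exact h0 w
    have hsum : ∑ w, Function.update p0 v (p0 v + 1) w = (∑ w, p0 w) + 1 := by
      rw [Finset.sum_update_of_mem (Finset.mem_univ v), Finset.sdiff_singleton_eq_erase]
      rw [← Finset.sum_erase_add Finset.univ p0 (Finset.mem_univ v)]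
      omega
    obtain ⟨p1, h1, h2, h3⟩ := ih _ hup (by omega) (by omega)
    refine ⟨p1, ?_, h2, h3⟩
    intro w
    refine le_trans ?_ (h1 w)
    by_cases hw : w = v
    · subst hw; simp [Function.update_self]
    · simp [Function.update_of_ne hw]

/-- mere splitting with prescribed sum -/
theorem exists_subconfig (p : V → ℕ) {t : ℕ} (hmp : t ≤ ∑ v, p v) :
    ∃ p1, p1 ≤ p ∧ ∑ v, p1 v = t := by
  obtain ⟨p1, _, h2, h3⟩ := exists_between_config 0 p (fun v => Nat.zero_le _) (by simp) hmp
  exact ⟨p1, h2, h3⟩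

theorem sum_sub_config {p1 p : V → ℕ} (h : p1 ≤ p) :
    ∑ v, (p v - p1 v) = ∑ v, p v - ∑ v, p1 v := by
  classical
  have : ∑ v, p v = ∑ v, (p v - p1 v) + ∑ v, p1 v := by
    rw [← Finset.sum_add_distrib]
    refine Finset.sum_congr rfl ?_
    intro v _
    have hv : p1 v ≤ p v := h v
    omega
  omega

end Util

/-! ### The double of a graph (product with K₂) -/

section Dbl

variable (G)

/-- The graph `G □ K₂` on `V × Bool`. -/
def Dbl : SimpleGraph (V × Bool) where
  Adj x y := (G.Adj x.1 y.1 ∧ x.2 = y.2) ∨ (x.1 = y.1 ∧ x.2 ≠ y.2)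
  symm := ⟨by
    rintro ⟨u, b⟩ ⟨v, c⟩ (⟨h, rfl⟩ | ⟨rfl, h⟩)
    · exact Or.inl ⟨h.symm, rfl⟩
    · exact Or.inr ⟨rfl, Ne.symm h⟩⟩
  loopless := ⟨by rintro ⟨u, b⟩ (⟨h, -⟩ | ⟨-, h⟩) <;> simp_all⟩

variable {G}

/-- Glue two configurations on the two slices. -/
def glue (pf pt : V → ℕ) : V × Bool → ℕ := fun x => bif x.2 then pt x.1 else pf x.1

@[simp] theorem glue_false (pf pt : V → ℕ) (v : V) : glue pf pt (v, false) = pf v := rfl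
@[simp] theorem glue_true (pf pt : V → ℕ) (v : V) : glue pf pt (v, true) = pt v := rfl

theorem glue_eta (P : V × Bool → ℕ) : P = glue (fun v => P (v, false)) (fun v => P (v, true)) := by
  funext ⟨v, b⟩; cases b <;> rfl

theorem move_glue_left {pf qf : V → ℕ} (h : PebMove G pf qf) (pt : V → ℕ) :
    PebMove (Dbl G) (glue pf pt) (glue qf pt) := by
  obtain ⟨u, v, hadj, hu, rfl⟩ := h
  refine ⟨(u, false), (v, false), Or.inl ⟨hadj, rfl⟩, hu, ?_⟩
  funext ⟨x, b⟩
  cases b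
  · simp only [glue_false]
    by_cases hx : x = u
    · subst hx; simp
    · by_cases hx2 : x = v
      · subst hx2; simp [hx, Prod.ext_iff]
      · simp [hx, hx2, Prod.ext_iff]
  · simp [Prod.ext_iff]

theorem move_glue_right {pt qt : V → ℕ} (h : PebMove G pt qt) (pf : V → ℕ) :
    PebMove (Dbl G) (glue pf pt) (glue pf qt) := by
  obtain ⟨u, v, hadj, hu, rfl⟩ := h
  refine ⟨(u, true), (v, true), Or.inl ⟨hadj, rfl⟩, hu, ?_⟩
  funext ⟨x, b⟩
  cases b
  · simp [Prod.ext_iff]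
  · simp only [glue_true]
    by_cases hx : x = u
    · subst hx; simp
    · by_cases hx2 : x = v
      · subst hx2; simp [hx, Prod.ext_iff]
      · simp [hx, hx2, Prod.ext_iff]

theorem reach_glue_left {pf qf : V → ℕ} (h : Reach G pf qf) (pt : V → ℕ) :
    Reach (Dbl G) (glue pf pt) (glue qf pt) := by
  induction h with
  | refl => exact .refl
  | tail _ hstep ih => exact ih.tail (move_glue_left hstep pt)

theorem reach_glue_right {pt qt : V → ℕ} (h : Reach G pt qt) (pf : V → ℕ) :
    Reach (Dbl G) (glue pf pt) (glue pf qt) := by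
  induction h with
  | refl => exact .refl
  | tail _ hstep ih => exact ih.tail (move_glue_right hstep pf)

/-- A cross move from the `true` slice to the `false` slice. -/
theorem move_cross {pt : V → ℕ} (pf : V → ℕ) {v : V} (hv : 2 ≤ pt v) :
    PebMove (Dbl G) (glue pf pt)
      (glue (Function.update pf v (pf v + 1)) (Function.update pt v (pt v - 2))) := by
  refine ⟨(v, true), (v, false), Or.inr ⟨rfl, by simp⟩, hv, ?_⟩
  funext ⟨x, b⟩
  cases b
  · simp only [glue_false]
    by_cases hx : x = v
    · subst hx; simp [Function.update_self, Prod.ext_iff]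
    · simp [Function.update_of_ne hx, hx, Prod.ext_iff]
  · simp only [glue_true]
    by_cases hx : x = v
    · subst hx; simp [Function.update_self, Prod.ext_iff]
    · simp [Function.update_of_ne hx, hx, Prod.ext_iff]

end Dbl



section Phi
variable [Fintype V]

/-- `phi p = ∑ ⌈p v / 2⌉`. -/
def phi (p : V → ℕ) : ℕ := ∑ v, (p v + 1) / 2

theorem phi_le_sum (p : V → ℕ) : phi p ≤ ∑ v, p v :=
  Finset.sum_le_sum fun v _ => by omega

theorem phi_sub_le {p1 p : V → ℕ} (h : p1 ≤ p) :
    phi p - phi p1 ≤ phi (fun v => p v - p1 v) := by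
  have h1 : phi p ≤ phi p1 + phi (fun v => p v - p1 v) := by
    rw [phi, phi, phi, ← Finset.sum_add_distrib]
    refine Finset.sum_le_sum fun v _ => ?_
    have := h v; omega
  omega

theorem sum_div_two (p : V → ℕ) : ∑ v, p v / 2 = ∑ v, p v - phi p := by
  have : ∑ v, p v = (∑ v, p v / 2) + phi p := by
    rw [phi, ← Finset.sum_add_distrib]
    exact Finset.sum_congr rfl fun v _ => by omega
  omega

theorem phi_sub_div_le_card (p : V → ℕ) : phi p - (∑ v, p v / 2) ≤ Fintype.card V := by
  have h1 : phi p ≤ (∑ v, p v / 2) + Fintype.card V := by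
    rw [phi]
    calc ∑ v, (p v + 1) / 2 ≤ ∑ v, (p v / 2 + 1) := Finset.sum_le_sum (fun v _ => by omega)
    _ = (∑ v, p v / 2) + Fintype.card V := by
        rw [Finset.sum_add_distrib]; simp [Finset.card_univ]
  omega

/-- IVT for `phi`: any value up to `phi p` is achieved by a subconfiguration. -/
theorem exists_phi_subconfig (p : V → ℕ) {X : ℕ} (hX : X ≤ phi p) :
    ∃ p1, p1 ≤ p ∧ phi p1 = X := by
  classical
  induction X with
  | zero => exact ⟨0, fun v => Nat.zero_le _, by simp [phi]⟩
  | succ X ih =>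
    obtain ⟨p1, hle, hphi⟩ := ih (by omega)
    have hlt : phi p1 < phi p := by omega
    have hex : ∃ v, (p1 v + 1) / 2 < (p v + 1) / 2 := by
      by_contra hc
      push_neg at hc
      exact absurd (Finset.sum_le_sum fun v _ => hc v) (not_le.mpr hlt)
    obtain ⟨v, hv⟩ := hex
    refine ⟨Function.update p1 v (p1 v + 1 + p1 v % 2), ?_, ?_⟩
    · intro w
      by_cases hw : w = v
      · subst hw; simp only [Function.update_self]; have h9 := hle w; omega
      · simp only [Function.update_of_ne hw]; exact hle w
    · have hrw : (fun w => (Function.update p1 v (p1 v + 1 + p1 v % 2) w + 1) / 2)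
          = Function.update (fun w => (p1 w + 1) / 2) v ((p1 v + 1 + p1 v % 2 + 1) / 2) := by
        funext w
        by_cases hw : w = v
        · subst hw; simp
        · simp [Function.update_of_ne hw]
      have : phi (Function.update p1 v (p1 v + 1 + p1 v % 2))
          = ∑ w, Function.update (fun w => (p1 w + 1) / 2) v ((p1 v + 1 + p1 v % 2 + 1) / 2) w := by
        rw [phi, ← hrw]
      rw [this, Finset.sum_update_of_mem (Finset.mem_univ v), Finset.sdiff_singleton_eq_erase]
      rw [phi, ← Finset.sum_erase_add Finset.univ _ (Finset.mem_univ v)] at hphi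
      omega

end Phi

section Transfer
variable [Fintype V]

/-- Move `h v` pairs across from the `true` slice to the `false` slice, at each vertex `v`. -/
theorem reach_transfer_part (h pf pt : V → ℕ) (hh : ∀ v, h v ≤ pt v / 2) :
    Reach (Dbl G) (glue pf pt) (glue (pf + h) (fun v => pt v - 2 * h v)) := by
  classical
  obtain ⟨k, hk⟩ : ∃ k, ∑ v, h v = k := ⟨_, rfl⟩
  induction k generalizing pf pt h with
  | zero =>
    have hz : ∀ v, h v = 0 := fun v => Finset.sum_eq_zero_iff.mp hk v (Finset.mem_univ v)
    have : glue pf pt = glue (pf + h) (fun v => pt v - 2 * h v) := by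
      funext ⟨x, b⟩
      cases b
      · simp [hz x]
      · simp [hz x]
    rw [← this]
  | succ k ih =>
    have hex : ∃ v, h v ≠ 0 := by
      by_contra hc
      push_neg at hc
      simp [hc] at hk
    obtain ⟨v, hv⟩ := hex
    have hv2 : 2 ≤ pt v := by have := hh v; omega
    have hstep := move_cross (G := G) pf hv2
    have hrest := ih (Function.update h v (h v - 1)) (Function.update pf v (pf v + 1))
      (Function.update pt v (pt v - 2))
      (by
        intro w
        by_cases hw : w = v
        · subst hw; simp only [Function.update_self]; have := hh w; omega
        · simp only [Function.update_of_ne hw]; exact hh w)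
      (by
        have h1 : (fun w => Function.update h v (h v - 1) w)
            = Function.update h v (h v - 1) := rfl
        rw [Finset.sum_update_of_mem (Finset.mem_univ v), Finset.sdiff_singleton_eq_erase]
        rw [← Finset.sum_erase_add Finset.univ h (Finset.mem_univ v)] at hk
        omega)
    refine Relation.ReflTransGen.trans (Relation.ReflTransGen.single hstep) (hrest.trans ?_)
    have hfin : (glue (Function.update pf v (pf v + 1) + Function.update h v (h v - 1))
        (fun w => Function.update pt v (pt v - 2) w - 2 * Function.update h v (h v - 1) w))
        = glue (pf + h) (fun v => pt v - 2 * h v) := by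
      funext ⟨x, b⟩
      cases b
      · by_cases hx : x = v
        · subst hx; simp; omega
        · simp [Function.update_of_ne hx]
      · by_cases hx : x = v
        · subst hx; simp; have := hh x; omega
        · simp [Function.update_of_ne hx]
    rw [← hfin]

end Transfer


section Iso
variable {W : Type*} [DecidableEq W] {H : SimpleGraph W}

theorem move_map (e : G ≃g H) {p q : V → ℕ} (h : PebMove G p q) :
    PebMove H (p ∘ e.symm) (q ∘ e.symm) := by
  obtain ⟨u, v, hadj, hu, rfl⟩ := h
  refine ⟨e u, e v, e.map_adj_iff.mpr hadj, by simpa using hu, ?_⟩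
  funext x
  simp only [Function.comp_apply]
  by_cases hx : x = e u
  · subst hx; simp
  · have hx' : e.symm x ≠ u := fun hc => hx (by
      simpa using congrArg e hc)
    by_cases hx2 : x = e v
    · subst hx2; simp [hx, hx', hadj.ne']
    · have hx2' : e.symm x ≠ v := fun hc => hx2 (by simpa using congrArg e hc)
      simp [hx, hx2, hx', hx2']

theorem reach_map (e : G ≃g H) {p q : V → ℕ} (h : Reach G p q) :
    Reach H (p ∘ e.symm) (q ∘ e.symm) := by
  induction h with
  | refl => exact .refl
  | tail _ hstep ih => exact ih.tail (move_map e hstep)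

theorem solvableK_map (e : G ≃g H) {r : V} {k : ℕ} {p : V → ℕ}
    (h : SolvableK G r k p) : SolvableK H (e r) k (p ∘ e.symm) := by
  obtain ⟨q, hq, hk⟩ := h
  exact ⟨q ∘ e.symm, reach_map e hq, by simpa using hk⟩

end Iso

section Step
variable [Fintype V]

/-- Solve on the `false` slice; the `true` slice is a bystander. -/
theorem solve_left {r : V} {k : ℕ} {pf : V → ℕ} (pt : V → ℕ)
    (h : SolvableK G r k pf) : SolvableK (Dbl G) (r, false) k (glue pf pt) := by
  obtain ⟨q, hq, hk⟩ := h
  exact ⟨glue q pt, reach_glue_left hq pt, by simpa using hk⟩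

/-- Two pebbles reaching `r` in the `true` slice yield one pebble at `(r, false)`. -/
theorem solve_right {r : V} {pt : V → ℕ} (pf : V → ℕ)
    (h : SolvableK G r 2 pt) : SolvableK (Dbl G) (r, false) 1 (glue pf pt) := by
  obtain ⟨q, hq, hk⟩ := h
  refine ⟨_, (reach_glue_right hq pf).tail (move_cross pf hk), ?_⟩
  simp

theorem glue_add (pf qf pt qt : V → ℕ) :
    glue pf pt + glue qf qt = glue (pf + qf) (pt + qt) := by
  funext ⟨x, b⟩; cases b <;> rfl

/-- The inductive step: if `G` (on at most `m` vertices) satisfies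
(I) `m` pebbles anywhere are enough to reach any root, and
(II) `phi ≥ m + 1` suffices for two pebbles on any root,
then `Dbl G` satisfies the same with `2 * m`. -/
theorem step (m : ℕ) (hcard : Fintype.card V ≤ m)
    (H1 : ∀ (r : V) (p : V → ℕ), m ≤ ∑ v, p v → SolvableK G r 1 p)
    (H2 : ∀ (r : V) (p : V → ℕ), m + 1 ≤ phi p → SolvableK G r 2 p) :
    (∀ (r : V) (P : V × Bool → ℕ), 2 * m ≤ ∑ x, P x → SolvableK (Dbl G) (r, false) 1 P) ∧
    (∀ (r : V) (P : V × Bool → ℕ), 2 * m + 1 ≤ phi P → SolvableK (Dbl G) (r, false) 2 P) := by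
  have hsum : ∀ P : V × Bool → ℕ, ∑ x, P x = (∑ v, P (v, false)) + ∑ v, P (v, true) := by
    intro P
    rw [Fintype.sum_prod_type, ← Finset.sum_add_distrib]
    exact Finset.sum_congr rfl fun v _ => by rw [Fintype.sum_bool]; omega
  have hphid : ∀ P : V × Bool → ℕ,
      phi P = phi (fun v => P (v, false)) + phi (fun v => P (v, true)) := by
    intro P
    rw [phi, phi, phi, Fintype.sum_prod_type, ← Finset.sum_add_distrib]
    exact Finset.sum_congr rfl fun v _ => by rw [Fintype.sum_bool]; omega
  constructor
  · -- one pebble from 2m pebbles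
    intro r P htot
    rw [hsum] at htot
    rw [glue_eta P]
    by_cases ha : m ≤ ∑ v, P (v, false)
    · exact solve_left _ (H1 r _ ha)
    by_cases hb : m + 1 ≤ phi (fun v => P (v, true))
    · exact solve_right _ (H2 r _ hb)
    push_neg at ha hb
    have hE : m - (∑ v, P (v, false)) ≤ ∑ v, (fun v => P (v, true)) v / 2 := by
      rw [sum_div_two]
      omega
    obtain ⟨h, hle, hsumh⟩ := exists_subconfig _ hE
    refine SolvableK.of_reach (reach_transfer_part h _ _ hle) ?_
    refine solve_left _ (H1 r _ ?_)
    have : ∑ v, ((fun v => P (v, false)) + h) v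
        = (∑ v, P (v, false)) + ∑ v, h v := by
      simp only [Pi.add_apply]
      rw [← Finset.sum_add_distrib]
    omega
  · -- two pebbles from phi ≥ 2m + 1
    intro r P hphiP
    rw [hphid] at hphiP
    rw [glue_eta P]
    by_cases h1 : m + 1 ≤ phi (fun v => P (v, false))
    · exact solve_left _ (H2 r _ h1)
    push_neg at h1
    by_cases h2 : 2 * m + 2 ≤ phi (fun v => P (v, true))
    · -- split the true slice into two parts with phi = m+1 each
      obtain ⟨p1, hle, hph1⟩ := exists_phi_subconfig (fun v => P (v, true))
        (X := m + 1) (by omega)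
      have hph2 : m + 1 ≤ phi (fun v => P (v, true) - p1 v) := by
        have := phi_sub_le hle
        omega
      have hdecomp : glue (fun v => P (v, false)) (fun v => P (v, true))
          = glue (0 : V → ℕ) p1
            + glue (fun v => P (v, false)) (fun v => P (v, true) - p1 v) := by
        rw [glue_add]
        funext ⟨x, b⟩
        cases b
        · simp
        · have hx : p1 x ≤ P (x, true) := hle x
          simp
          omega
      rw [hdecomp]
      exact (solve_right _ (H2 r _ (le_of_eq hph1.symm))).add (solve_right _ (H2 r _ hph2))
    push_neg at h2
    have hφB : m + 1 ≤ phi (fun v => P (v, true)) := by omega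
    have hodd : phi (fun v => P (v, true)) - ∑ v, P (v, true) / 2 ≤ Fintype.card V := by
      simpa using phi_sub_div_le_card (fun v => P (v, true))
    have hEB : phi (fun v => P (v, true)) - (m + 1) ≤ ∑ v, P (v, true) / 2 := by omega
    obtain ⟨h, hle, hsumh⟩ := exists_subconfig (fun v => P (v, true) / 2) hEB
    refine SolvableK.of_reach (reach_transfer_part h _ _ hle) ?_
    have hA : m ≤ ∑ v, ((fun v => P (v, false)) + h) v := by
      have hφa : phi (fun v => P (v, false)) ≤ ∑ v, P (v, false) := phi_le_sum _
      have : ∑ v, ((fun v => P (v, false)) + h) v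
          = (∑ v, P (v, false)) + ∑ v, h v := by
        simp only [Pi.add_apply]
        rw [← Finset.sum_add_distrib]
      omega
    have hB : m + 1 ≤ phi (fun v => (fun v => P (v, true)) v - 2 * h v) := by
      have hkey : phi (fun v => P (v, true) - 2 * h v)
          = phi (fun v => P (v, true)) - ∑ v, h v := by
        have hpt : ∀ v, (P (v, true) - 2 * h v + 1) / 2 = (P (v, true) + 1) / 2 - h v :=
          fun v => by have := hle v; simp at this; omega
        rw [phi, phi]
        rw [Finset.sum_congr rfl fun v _ => hpt v]
        have hle2 : h ≤ fun v => (P (v, true) + 1) / 2 := by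
          intro v; have := hle v; simp at this ⊢; omega
        exact sum_sub_config hle2
      rw [hkey]
      omega
    have hdecomp : glue ((fun v => P (v, false)) + h) (fun v => P (v, true) - 2 * h v)
        = glue ((fun v => P (v, false)) + h) (0 : V → ℕ)
          + glue (0 : V → ℕ) (fun v => P (v, true) - 2 * h v) := by
      rw [glue_add]
      funext ⟨x, b⟩
      cases b <;> simp
    rw [hdecomp]
    exact (solve_left _ (H1 r _ hA)).add (solve_right _ (H2 r _ hB))

end Step

end Peb



theorem cube_adj {n : ℕ} {x y : Fin n → Bool} :
    (cubeGraph n).Adj x y ↔ hammingDist x y = 1 := by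
  rw [cubeGraph, SimpleGraph.fromRel_adj]
  constructor
  · rintro ⟨hne, h | h⟩
    · exact h
    · rwa [hammingDist_comm]
  · intro h
    refine ⟨?_, Or.inl h⟩
    intro hc
    subst hc
    simp [hammingDist_self] at h

/-- split the last coordinate -/
def cubeSplit (n : ℕ) : (Fin (n + 1) → Bool) ≃ (Fin n → Bool) × Bool where
  toFun x := (Fin.init x, x (Fin.last n))
  invFun y := Fin.snoc y.1 y.2
  left_inv x := Fin.snoc_init_self x
  right_inv y := by
    obtain ⟨y1, y2⟩ := y
    simp [Fin.init_snoc, Fin.snoc_last]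

theorem hamming_split {n : ℕ} (x y : Fin (n + 1) → Bool) :
    hammingDist x y = hammingDist (Fin.init x) (Fin.init y)
      + (if x (Fin.last n) = y (Fin.last n) then 0 else 1) := by
  have hform : ∀ (m : ℕ) (a b : Fin m → Bool),
      hammingDist a b = ∑ i, if a i ≠ b i then 1 else 0 := by
    intro m a b
    rw [hammingDist, Finset.card_filter]
  rw [hform, hform, Fin.sum_univ_castSucc]
  simp only [Fin.init]
  congr 1
  by_cases h : x (Fin.last n) = y (Fin.last n) <;> simp [h]

def cubeIso (n : ℕ) : Peb.Dbl (cubeGraph n) ≃g cubeGraph (n + 1) where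
  toEquiv := (cubeSplit n).symm
  map_rel_iff' := by
    rintro ⟨a1, a2⟩ ⟨b1, b2⟩
    show (cubeGraph (n+1)).Adj (Fin.snoc a1 a2) (Fin.snoc b1 b2) ↔
      ((cubeGraph n).Adj a1 b1 ∧ a2 = b2) ∨ (a1 = b1 ∧ a2 ≠ b2)
    rw [cube_adj, hamming_split, Fin.init_snoc, Fin.init_snoc, Fin.snoc_last, Fin.snoc_last,
      cube_adj]
    by_cases h : a2 = b2
    · subst h
      simp
    · have hrw : (if a2 = b2 then 0 else 1) = 1 := if_neg h
      rw [hrw]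
      have h0 : hammingDist a1 b1 + 1 = 1 ↔ hammingDist a1 b1 = 0 := by omega
      rw [h0, hammingDist_eq_zero]
      simp [h]

namespace Peb
section Swap
variable {V : Type*} [DecidableEq V] {G : SimpleGraph V}

def boolNot : Bool ≃ Bool := ⟨Bool.not, Bool.not, Bool.not_not, Bool.not_not⟩

def swapIso : Dbl G ≃g Dbl G where
  toEquiv := Equiv.prodCongr (Equiv.refl V) boolNot
  map_rel_iff' := by
    rintro ⟨u, b⟩ ⟨v, c⟩
    show (Dbl G).Adj (u, !b) (v, !c) ↔ (Dbl G).Adj (u, b) (v, c)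
    constructor
    · rintro (⟨h, hb⟩ | ⟨h, hb⟩)
      · exact Or.inl ⟨h, by simpa using hb⟩
      · exact Or.inr ⟨h, by simpa using hb⟩
    · rintro (⟨h, hb⟩ | ⟨h, hb⟩)
      · exact Or.inl ⟨h, by simpa using hb⟩
      · exact Or.inr ⟨h, by simpa using hb⟩

theorem swapIso_apply (u : V) (b : Bool) : (swapIso (G := G)) (u, b) = (u, !b) := rfl

variable [Fintype V]

theorem step_all (m : ℕ) (hcard : Fintype.card V ≤ m)
    (H1 : ∀ (r : V) (p : V → ℕ), m ≤ ∑ v, p v → SolvableK G r 1 p)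
    (H2 : ∀ (r : V) (p : V → ℕ), m + 1 ≤ phi p → SolvableK G r 2 p) :
    (∀ (ρ : V × Bool) (P : V × Bool → ℕ), 2 * m ≤ ∑ x, P x → SolvableK (Dbl G) ρ 1 P) ∧
    (∀ (ρ : V × Bool) (P : V × Bool → ℕ), 2 * m + 1 ≤ phi P → SolvableK (Dbl G) ρ 2 P) := by
  obtain ⟨S1, S2⟩ := step m hcard H1 H2
  have hswap : ∀ (P : V × Bool → ℕ), (P ∘ (swapIso (G := G))) ∘ (swapIso (G := G)).symm = P := by
    intro P
    funext x
    simp only [Function.comp_apply]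
    congr 1
    exact (swapIso (G := G)).toEquiv.apply_symm_apply x
  have hsum : ∀ (P : V × Bool → ℕ), ∑ x, (P ∘ (swapIso (G := G))) x = ∑ x, P x := by
    intro P
    exact Equiv.sum_comp (swapIso (G := G)).toEquiv P
  have hphi : ∀ (P : V × Bool → ℕ), phi (P ∘ (swapIso (G := G))) = phi P := by
    intro P
    exact Equiv.sum_comp (swapIso (G := G)).toEquiv (fun x => (P x + 1) / 2)
  constructor
  · rintro ⟨r, b⟩ P hP
    cases b
    · exact S1 r P hP
    · have h0 := S1 r (P ∘ (swapIso (G := G))) (by rw [hsum]; exact hP)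
      have h1 := solvableK_map (swapIso (G := G)) h0
      rw [hswap] at h1
      exact h1
  · rintro ⟨r, b⟩ P hP
    cases b
    · exact S2 r P hP
    · have h0 := S2 r (P ∘ (swapIso (G := G))) (by rw [hphi]; exact hP)
      have h1 := solvableK_map (swapIso (G := G)) h0
      rw [hswap] at h1
      exact h1

end Swap
end Peb

open Peb in
theorem cube_package (n : ℕ) :
    (∀ (r : Fin n → Bool) (p : (Fin n → Bool) → ℕ),
        2 ^ n ≤ ∑ v, p v → SolvableK (cubeGraph n) r 1 p) ∧
    (∀ (r : Fin n → Bool) (p : (Fin n → Bool) → ℕ),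
        2 ^ n + 1 ≤ phi p → SolvableK (cubeGraph n) r 2 p) := by
  induction n with
  | zero =>
    have huniv : ∀ r : Fin 0 → Bool, (Finset.univ : Finset (Fin 0 → Bool)) = {r} := by
      intro r
      apply Finset.eq_singleton_iff_unique_mem.mpr
      exact ⟨Finset.mem_univ r, fun x _ => Subsingleton.elim x r⟩
    constructor
    · intro r p hp
      rw [huniv r, Finset.sum_singleton] at hp
      exact solvableK_of_mem (by omega)
    · intro r p hp
      rw [phi, huniv r, Finset.sum_singleton] at hp
      exact ⟨p, Relation.ReflTransGen.refl, by omega⟩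
  | succ n ih =>
    obtain ⟨ih1, ih2⟩ := ih
    have hcard : Fintype.card (Fin n → Bool) ≤ 2 ^ n := by
      rw [Fintype.card_fun]
      simp
    obtain ⟨D1, D2⟩ := step_all (G := cubeGraph n) (2 ^ n) hcard ih1 ih2
    have hroot : ∀ r : Fin (n+1) → Bool, (cubeIso n) ((cubeSplit n) r) = r := fun r =>
      (cubeSplit n).symm_apply_apply r
    have hconf : ∀ p : (Fin (n+1) → Bool) → ℕ,
        (p ∘ (cubeSplit n).symm) ∘ (cubeIso n).symm = p := by
      intro p
      funext x
      simp only [Function.comp_apply]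
      congr 1
      exact (cubeSplit n).symm_apply_apply x
    have hsum : ∀ p : (Fin (n+1) → Bool) → ℕ,
        ∑ x, (p ∘ (cubeSplit n).symm) x = ∑ v, p v := fun p =>
      Equiv.sum_comp (cubeSplit n).symm p
    have hphi : ∀ p : (Fin (n+1) → Bool) → ℕ,
        phi (p ∘ (cubeSplit n).symm) = phi p := fun p =>
      Equiv.sum_comp (cubeSplit n).symm (fun x => (p x + 1) / 2)
    have hpow : 2 * 2 ^ n = 2 ^ (n + 1) := by ring
    constructor
    · intro r p hp
      have h0 := D1 ((cubeSplit n) r) (p ∘ (cubeSplit n).symm)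
        (by rw [hsum, hpow]; exact hp)
      have h1 := solvableK_map (cubeIso n) h0
      rw [hconf] at h1
      rw [hroot] at h1
      exact h1
    · intro r p hp
      have h0 := D2 ((cubeSplit n) r) (p ∘ (cubeSplit n).symm)
        (by rw [hphi, hpow]; exact hp)
      have h1 := solvableK_map (cubeIso n) h0
      rw [hconf] at h1
      rw [hroot] at h1
      exact h1

namespace Peb
section Weight
variable {V : Type*} [DecidableEq V] [Fintype V] {G : SimpleGraph V}

theorem weight_move (w : V → ℕ) (hw : ∀ u v, G.Adj u v → w v ≤ 2 * w u)
    {p q : V → ℕ} (h : PebMove G p q) : ∑ x, q x * w x ≤ ∑ x, p x * w x := by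
  obtain ⟨u, v, hadj, hu, rfl⟩ := h
  obtain ⟨k, hk⟩ : ∃ k, p u = k + 2 := ⟨p u - 2, by omega⟩
  have key : ∀ x, (if x = u then p u - 2 else if x = v then p v + 1 else p x) * w x
      + (if x = u then 2 * w u else 0)
      = p x * w x + (if x = v then w v else 0) := by
    intro x
    rw [hk]
    by_cases hx : x = u
    · subst hx
      simp [hadj.ne]
      rw [hk]
      ring
    · by_cases hx2 : x = v
      · subst hx2
        simp [hx]
        ring
      · simp [hx, hx2]
  have hifu : (∑ x, if x = u then 2 * w u else 0) = 2 * w u := by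
    rw [Finset.sum_ite_eq' Finset.univ u (fun _ => 2 * w u)]
    simp
  have hifv : (∑ x, if x = v then w v else 0) = w v := by
    rw [Finset.sum_ite_eq' Finset.univ v (fun _ => w v)]
    simp
  have hsums : (∑ x, (if x = u then p u - 2 else if x = v then p v + 1 else p x) * w x)
      + 2 * w u = (∑ x, p x * w x) + w v := by
    rw [← hifu, ← hifv, ← Finset.sum_add_distrib, ← Finset.sum_add_distrib]
    exact Finset.sum_congr rfl fun x _ => key x
  have hbeta : (∑ x, (fun x => if x = u then p u - 2 else if x = v then p v + 1 else p x) x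
      * w x) = ∑ x, (if x = u then p u - 2 else if x = v then p v + 1 else p x) * w x := rfl
  rw [hbeta]
  have := hw u v hadj
  omega

theorem weight_reach (w : V → ℕ) (hw : ∀ u v, G.Adj u v → w v ≤ 2 * w u)
    {p q : V → ℕ} (h : Reach G p q) : ∑ x, q x * w x ≤ ∑ x, p x * w x := by
  induction h with
  | refl => exact le_refl _
  | tail _ hstep ih => exact le_trans (weight_move w hw hstep) ih

end Weight
end Peb

open Peb in
theorem cube_unsolvable (n : ℕ) (hn : 1 ≤ n) (r : Fin n → Bool) :
    ¬ Solvable (cubeGraph n) r (fun v => if v = (fun i => !(r i)) then 2 ^ n - 1 else 0) := by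
  rintro ⟨q, hreach, hq⟩
  set a : Fin n → Bool := fun i => !(r i) with ha
  set w : (Fin n → Bool) → ℕ := fun v => 2 ^ (n - hammingDist v r) with hwdef
  have hw : ∀ u v, (cubeGraph n).Adj u v → w v ≤ 2 * w u := by
    intro u v h
    rw [cube_adj] at h
    have htri : hammingDist u r ≤ hammingDist u v + hammingDist v r := hammingDist_triangle u v r
    have hexp : n - hammingDist v r ≤ (n - hammingDist u r) + 1 := by omega
    calc w v = 2 ^ (n - hammingDist v r) := rfl
    _ ≤ 2 ^ ((n - hammingDist u r) + 1) := Nat.pow_le_pow_right (by norm_num) hexp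
    _ = 2 * 2 ^ (n - hammingDist u r) := by ring
  have hend : 2 ^ n ≤ ∑ x, q x * w x := by
    have hr : 1 * 2 ^ n ≤ q r * w r := by
      have hwr : w r = 2 ^ n := by
        rw [hwdef]
        simp [hammingDist_self]
      rw [hwr]
      exact Nat.mul_le_mul_right _ hq
    calc 2 ^ n = 1 * 2 ^ n := (one_mul _).symm
    _ ≤ q r * w r := hr
    _ ≤ ∑ x, q x * w x := Finset.single_le_sum (f := fun x => q x * w x)
        (fun x _ => Nat.zero_le _) (Finset.mem_univ r)
  have hstart : (∑ x, (if x = a then 2 ^ n - 1 else 0) * w x) = 2 ^ n - 1 := by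
    have hterm : ∀ x, (if x = a then 2 ^ n - 1 else 0) * w x
        = if x = a then (2 ^ n - 1) * w a else 0 := by
      intro x
      by_cases hx : x = a
      · subst hx; simp
      · simp [hx]
    rw [Finset.sum_congr rfl fun x _ => hterm x, Finset.sum_ite_eq' Finset.univ a]
    have hda : hammingDist a r = n := by
      rw [hammingDist]
      have : (Finset.univ.filter fun i => a i ≠ r i) = Finset.univ := by
        apply Finset.filter_true_of_mem
        intro i _
        rw [ha]
        simp
      rw [this]
      simp
    have hwa : w a = 1 := by
      rw [hwdef]
      simp [hda]
    simp [hwa]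
  have hmono := weight_reach w hw hreach
  rw [hstart] at hmono
  have h1 : 1 ≤ 2 ^ n := Nat.one_le_two_pow
  omega

theorem stmt12 (n : ℕ) (hn : 2 ≤ n) : pebblingNumber (cubeGraph n) = 2 ^ n := by
  rw [pebblingNumber]
  have hup : (2 ^ n) ∈ {N | ∀ (r : Fin n → Bool) (p : (Fin n → Bool) → ℕ),
      N ≤ ∑ v, p v → Solvable (cubeGraph n) r p} := by
    intro r p hp
    exact (cube_package n).1 r p hp
  apply le_antisymm
  · exact Nat.sInf_le hup
  · apply le_csInf ⟨2 ^ n, hup⟩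
    intro N hN
    by_contra hc
    push_neg at hc
    set r : Fin n → Bool := fun _ => false with hr
    set a : Fin n → Bool := fun i => !(r i) with ha
    have hsum : ∑ v, (fun v => if v = a then 2 ^ n - 1 else 0) v = 2 ^ n - 1 := by
      rw [Finset.sum_ite_eq' Finset.univ a (fun _ => 2 ^ n - 1)]
      simp
    have h1 : 1 ≤ 2 ^ n := Nat.one_le_two_pow
    have hsolv := hN r (fun v => if v = a then 2 ^ n - 1 else 0) (le_trans (by omega) (le_of_eq hsum.symm))
    exact cube_unsolvable n (by omega) r hsolv
end
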